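/- arXiv:2210.10268 — 5 statements merged into one kernel-verified Lean document; each statement's English description precedes it below -/
import Mathlib

section
/- Let d ≥ 1 and m ≥ 2 be integers. Then, as integers, d·C(d+m−2, m−1)² − (d(d−1)/2)·C(d+m−3, m−2)² ≤ |A_d^m| ≤ d·C(d+m−2, m−1)². -/
/-!
STATEMENT 2: For integers `d ≥ 1` and `m ≥ 2`, with `T(d,m)` the set of multi-indices
`α ∈ ℕ^d` with `∑ α_i = m` and `A_d^m` the set of ordered pairs `(α, β) ∈ T(d,m) × T(d,m)`
sharing a variable (some index `i` with `α_i ≥ 1` and `β_i ≥ 1`), one has, as integers,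
`d·C(d+m−2, m−1)² − (d(d−1)/2)·C(d+m−3, m−2)² ≤ |A_d^m| ≤ d·C(d+m−2, m−1)²`.
-/

/-- The set `A_d^m` of ordered pairs of multi-indices of total degree `m` on `d` variables
whose monomials share a variable. -/
noncomputable def Adm (d m : ℕ) : Finset ((Fin d → ℕ) × (Fin d → ℕ)) :=
  (Finset.Nat.antidiagonalTuple d m ×ˢ Finset.Nat.antidiagonalTuple d m).filter
    (fun p => ∃ i, 1 ≤ p.1 i ∧ 1 ≤ p.2 i)

section Aux

open Finset

/-- Stars and bars, list version. -/
lemma len_adt (k n : ℕ) : (List.Nat.antidiagonalTuple k n).length = (k + n - 1).choose n := by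
  induction k generalizing n with
  | zero => cases n <;> simp [List.Nat.antidiagonalTuple]
  | succ k ih =>
    rw [List.Nat.antidiagonalTuple, List.length_flatMap, List.Nat.antidiagonal, List.map_map]
    have h1 : ∀ (f : ℕ → ℕ), ((List.range (n+1)).map f).sum = ∑ i ∈ Finset.range (n+1), f i :=
      fun f => rfl
    rw [h1]
    have h2 : ∀ i, (((List.length ∘ fun ni : ℕ × ℕ =>
          List.map (fun x : Fin k → ℕ => (Fin.cons ni.1 x : Fin (k+1) → ℕ))
            (List.Nat.antidiagonalTuple k ni.2)) ∘ fun i =>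
          (i, n - i)) i) = (k + (n - i) - 1).choose (n - i) := by
      intro i
      simp only [Function.comp_apply, List.length_map]
      exact ih (n - i)
    refine (Finset.sum_congr rfl fun i _ => h2 i).trans ?_
    have h3 : ∑ i ∈ Finset.range (n+1), (k + (n - i) - 1).choose (n - i)
        = ∑ j ∈ Finset.range (n+1), (k + j - 1).choose j := by
      have := Finset.sum_range_reflect (fun j => (k + j - 1).choose j) (n+1)
      simpa using this
    rw [h3]
    cases k with
    | zero =>
      rw [Finset.sum_eq_single_of_mem 0 (Finset.mem_range.mpr (Nat.succ_pos n))]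
      · simp
      · intro j _ hj
        apply Nat.choose_eq_zero_of_lt
        omega
    | succ k =>
      have h4 : ∀ j, (k + 1 + j - 1).choose j = (k + j).choose k := by
        intro j
        have : k + 1 + j - 1 = k + j := by omega
        rw [this, ← Nat.choose_symm (by omega : j ≤ k + j)]
        congr 1; omega
      rw [Finset.sum_congr rfl fun j _ => h4 j]
      have h5 := Finset.sum_antidiagonal_choose_add k n
      rw [Finset.Nat.sum_antidiagonal_eq_sum_range_succ_mk] at h5
      have h6 : ∑ j ∈ Finset.range (n+1), (k + j).choose k
          = ∑ i ∈ Finset.range (n+1), (k + (n - i)).choose k := by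
        have := Finset.sum_range_reflect (fun j => (k + j).choose k) (n+1)
        simpa using this.symm
      rw [h6]
      simp only at h5
      rw [h5]
      have hs := Nat.choose_symm (show n ≤ k + n + 1 by omega)
      rw [show k + n + 1 - n = k + 1 by omega] at hs
      rw [show k + 1 + 1 + n - 1 = k + n + 1 by omega]
      exact hs

/-- Stars and bars: the number of `k`-tuples of naturals summing to `n`. -/
lemma card_adt (k n : ℕ) : (Finset.Nat.antidiagonalTuple k n).card = (k + n - 1).choose n :=
  len_adt k n

/-- Decreasing coordinate `i` by one is a bijection onto tuples of one smaller sum,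
compatibly with any predicate insensitive to coordinate `i`. -/
lemma filter_shift_card {d n : ℕ} (i : Fin d) (P : (Fin d → ℕ) → Prop) [DecidablePred P]
    (hP : ∀ α v, P (Function.update α i v) ↔ P α) :
    ((Finset.Nat.antidiagonalTuple d (n+1)).filter (fun α => 1 ≤ α i ∧ P α)).card
      = ((Finset.Nat.antidiagonalTuple d n).filter P).card := by
  apply Finset.card_bij' (fun α _ => Function.update α i (α i - 1))
    (fun β _ => Function.update β i (β i + 1))
  · intro α hα
    rw [Finset.mem_filter] at hα
    simp only [Function.update_self, Function.update_idem]
    rw [Nat.sub_add_cancel hα.2.1, Function.update_eq_self]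
  · intro β _
    simp only [Function.update_self, Function.update_idem, Nat.add_sub_cancel,
      Function.update_eq_self]
  · intro α hα
    rw [Finset.mem_filter] at hα ⊢
    obtain ⟨hmem, h1, hPα⟩ := hα
    rw [Finset.Nat.mem_antidiagonalTuple] at hmem ⊢
    constructor
    · rw [Finset.sum_update_of_mem (Finset.mem_univ i)]
      rw [← Finset.add_sum_erase _ _ (Finset.mem_univ i), Finset.erase_eq] at hmem
      omega
    · exact (hP α _).mpr hPα
  · intro β hβ
    rw [Finset.mem_filter] at hβ ⊢
    obtain ⟨hmem, hPβ⟩ := hβ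
    rw [Finset.Nat.mem_antidiagonalTuple] at hmem ⊢
    refine ⟨?_, ?_, (hP β _).mpr hPβ⟩
    · rw [Finset.sum_update_of_mem (Finset.mem_univ i)]
      rw [← Finset.add_sum_erase _ _ (Finset.mem_univ i), Finset.erase_eq] at hmem
      omega
    · simp [Function.update_self]

/-- Bonferroni inequality (degree 2): twice the sum of the cardinalities is at most twice the
cardinality of the union plus the sum over ordered pairs of distinct indices of the
cardinalities of pairwise intersections. -/
lemma bonferroni {ι β : Type*} [DecidableEq ι] [DecidableEq β] (s : Finset ι) (S : ι → Finset β) :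
    2 * ∑ i ∈ s, (S i).card ≤
      2 * (s.biUnion S).card + ∑ p ∈ s.offDiag, (S p.1 ∩ S p.2).card := by
  classical
  set U := s.biUnion S with hU
  have key : ∀ (t : Finset β), t ⊆ U → t.card = ∑ x ∈ U, (if x ∈ t then 1 else 0) := by
    intro t ht
    rw [← Finset.card_filter, Finset.filter_mem_eq_inter, Finset.inter_eq_right.mpr ht]
  have h1 : ∑ i ∈ s, (S i).card = ∑ x ∈ U, (s.filter (fun i => x ∈ S i)).card := by
    rw [Finset.sum_congr rfl (fun i hi => key (S i) (Finset.subset_biUnion_of_mem S hi)),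
      Finset.sum_comm]
    exact Finset.sum_congr rfl fun x _ => (Finset.card_filter _ _).symm
  have h2 : ∑ p ∈ s.offDiag, (S p.1 ∩ S p.2).card
      = ∑ x ∈ U, ((s.filter (fun i => x ∈ S i)).offDiag).card := by
    rw [Finset.sum_congr rfl (fun p hp => key (S p.1 ∩ S p.2)
      ((Finset.inter_subset_left).trans
        (Finset.subset_biUnion_of_mem S (Finset.mem_offDiag.mp hp).1))),
      Finset.sum_comm]
    refine Finset.sum_congr rfl fun x _ => ?_
    rw [← Finset.card_filter]
    congr 1
    ext p
    simp only [Finset.mem_filter, Finset.mem_offDiag, Finset.mem_inter]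
    tauto
  rw [h1, h2, Finset.mul_sum, Finset.card_eq_sum_ones U, Finset.mul_sum,
    ← Finset.sum_add_distrib]
  refine Finset.sum_le_sum fun x hx => ?_
  set n := (s.filter (fun i => x ∈ S i)).card with hn
  have hpos : 1 ≤ n := by
    rw [hU, Finset.mem_biUnion] at hx
    obtain ⟨i, hi, hxi⟩ := hx
    exact Finset.card_pos.mpr ⟨i, Finset.mem_filter.mpr ⟨hi, hxi⟩⟩
  rw [Finset.offDiag_card, ← hn]
  clear_value n
  obtain ⟨m, rfl⟩ : ∃ m, n = m + 1 := ⟨n - 1, by omega⟩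
  have h3 : m ≤ m * m := by
    rcases Nat.eq_zero_or_pos m with h | h
    · simp [h]
    · exact Nat.le_mul_of_pos_left m h
  have h4 : (m+1)*(m+1) = m*m + 2*m + 1 := by ring
  omega

end Aux

theorem card_Adm_bounds (d m : ℕ) (hd : 1 ≤ d) (hm : 2 ≤ m) :
    (d : ℤ) * (Nat.choose (d + m - 2) (m - 1) : ℤ) ^ 2
        - (d : ℤ) * ((d : ℤ) - 1) / 2 * (Nat.choose (d + m - 3) (m - 2) : ℤ) ^ 2
      ≤ ((Adm d m).card : ℤ) ∧
    ((Adm d m).card : ℤ) ≤ (d : ℤ) * (Nat.choose (d + m - 2) (m - 1) : ℤ) ^ 2 := by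
  classical
  obtain ⟨m', rfl⟩ : ∃ m', m = m' + 2 := ⟨m - 2, by omega⟩
  rw [show d + (m' + 2) - 2 = d + m' by omega, show m' + 2 - 1 = m' + 1 by omega,
    show d + (m' + 2) - 3 = d + m' - 1 by omega, show m' + 2 - 2 = m' by omega]
  obtain ⟨N, hN⟩ : ∃ N, (d + m').choose (m' + 1) = N := ⟨_, rfl⟩
  obtain ⟨M, hM⟩ : ∃ M, (d + m' - 1).choose m' = M := ⟨_, rfl⟩
  rw [hN, hM]
  set T := Finset.Nat.antidiagonalTuple d (m' + 2) with hT
  set S : Fin d → Finset ((Fin d → ℕ) × (Fin d → ℕ)) :=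
    fun i => (T.filter fun α => 1 ≤ α i) ×ˢ (T.filter fun α => 1 ≤ α i) with hS
  -- the union description of `Adm`
  have hA : Adm d (m' + 2) = Finset.univ.biUnion S := by
    ext ⟨a, b⟩
    simp only [Adm, hS, Finset.mem_filter, Finset.mem_product, Finset.mem_biUnion,
      Finset.mem_univ, true_and]
    tauto
  -- cardinality of one filtered set
  have hcard1 : ∀ i : Fin d, (T.filter fun α => 1 ≤ α i).card = N := by
    intro i
    have h := filter_shift_card (n := m' + 1) i (fun _ => True) (by simp)
    simp only [and_true, Finset.filter_true] at h
    have e : d + (m' + 1) - 1 = d + m' := rfl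
    rw [hT, h, card_adt, e]
    exact hN
  -- cardinality of a doubly filtered set
  have hcard2 : ∀ i j : Fin d, i ≠ j →
      (T.filter fun α => 1 ≤ α i ∧ 1 ≤ α j).card = M := by
    intro i j hij
    have h1 := filter_shift_card (n := m' + 1) i (fun α => 1 ≤ α j)
      (fun α v => by simp only [Function.update_of_ne (Ne.symm hij)])
    have h2 := filter_shift_card (n := m') j (fun _ => True) (by simp)
    simp only [and_true, Finset.filter_true] at h2
    rw [hT, h1, h2, card_adt]
    exact hM
  have hScard : ∀ i : Fin d, (S i).card = N * N := by
    intro i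
    rw [hS]
    simp [Finset.card_product, hcard1 i]
  -- upper bound in ℕ
  have hupper : (Adm d (m' + 2)).card ≤ d * (N * N) := by
    rw [hA]
    refine (Finset.card_biUnion_le).trans ?_
    rw [Finset.sum_congr rfl fun i _ => hScard i]
    simp [Finset.sum_const, Finset.card_univ]
  -- lower bound in ℕ via Bonferroni
  have hlower : 2 * (d * (N * N)) ≤
      2 * (Adm d (m' + 2)).card + (d * d - d) * (M * M) := by
    have hb := bonferroni (Finset.univ : Finset (Fin d)) S
    rw [← hA] at hb
    have hsum1 : ∑ i : Fin d, (S i).card = d * (N * N) := by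
      rw [Finset.sum_congr rfl fun i _ => hScard i]
      simp [Finset.sum_const, Finset.card_univ]
    have hsum2 : ∑ p ∈ (Finset.univ : Finset (Fin d)).offDiag, (S p.1 ∩ S p.2).card
        = (d * d - d) * (M * M) := by
      have hterm : ∀ p ∈ (Finset.univ : Finset (Fin d)).offDiag,
          (S p.1 ∩ S p.2).card = M * M := by
        rintro ⟨i, j⟩ hp
        have hij : i ≠ j := (Finset.mem_offDiag.mp hp).2.2
        rw [hS]
        simp only
        rw [Finset.product_inter_product, ← Finset.filter_and, Finset.card_product,
          hcard2 i j hij]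
      rw [Finset.sum_congr rfl hterm, Finset.sum_const, Finset.offDiag_card]
      simp [Finset.card_univ, mul_comm]
    rw [hsum1, hsum2] at hb
    exact hb
  -- pass to ℤ
  have hdd : d ≤ d * d := Nat.le_mul_of_pos_left d (by omega)
  have hupperZ : ((Adm d (m' + 2)).card : ℤ) ≤ (d : ℤ) * (N : ℤ) ^ 2 := by
    have := (Nat.cast_le (α := ℤ)).mpr hupper
    push_cast at this
    nlinarith [this]
  have hlowerZ : 2 * ((d : ℤ) * (N : ℤ) ^ 2) ≤
      2 * ((Adm d (m' + 2)).card : ℤ) + ((d : ℤ) * ((d : ℤ) - 1)) * (M : ℤ) ^ 2 := by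
    have := (Nat.cast_le (α := ℤ)).mpr hlower
    push_cast [Nat.cast_sub hdd] at this
    nlinarith [this]
  have heven : (2 : ℤ) ∣ (d : ℤ) * ((d : ℤ) - 1) := by
    rcases Int.even_mul_succ_self ((d : ℤ) - 1) with ⟨r, hr⟩
    exact ⟨r, by linarith [hr]⟩
  have hq : 2 * ((d : ℤ) * ((d : ℤ) - 1) / 2) = (d : ℤ) * ((d : ℤ) - 1) :=
    Int.mul_ediv_cancel' heven
  constructor
  · nlinarith [hlowerZ, hq, sq_nonneg (M : ℤ)]
  · exact hupperZ
end

section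
/- Let d ≥ 1 and m ≥ 1 be integers and set S(d,m) = Σ_{k=1}^{min(d,m)} C(d,k)·C(2m−k−1, k−1). Then S(d,m) ≤ |B_d^m| ≤ e^{2m} · S(d,m). -/
/-!
STATEMENT 3: For integers `d ≥ 1`, `m ≥ 1`, with `B_d^m` the set of ordered pairs
`(α, β) ∈ T(d,m) × T(d,m)` such that `α_i + β_i ≠ 1` for every `i`, and
`S(d,m) = ∑_{k=1}^{min(d,m)} C(d,k)·C(2m−k−1, k−1)`, one has
`S(d,m) ≤ |B_d^m| ≤ e^{2m} · S(d,m)`.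
-/

/-- The set `B_d^m` of ordered pairs of multi-indices of total degree `m` on `d` variables
whose product monomial contains no variable of degree exactly 1. -/
noncomputable def Bdm (d m : ℕ) : Finset ((Fin d → ℕ) × (Fin d → ℕ)) :=
  (Finset.Nat.antidiagonalTuple d m ×ˢ Finset.Nat.antidiagonalTuple d m).filter
    (fun p => ∀ i, p.1 i + p.2 i ≠ 1)

/-- `S(d,m) = ∑_{k=1}^{min(d,m)} C(d,k)·C(2m−k−1, k−1)`. -/
def Sdm (d m : ℕ) : ℕ :=
  ∑ k ∈ Finset.Icc 1 (min d m), Nat.choose d k * Nat.choose (2 * m - k - 1) (k - 1)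

open Finset

lemma my_card_sym {α : Type*} [DecidableEq α] (s : Finset α) (n : ℕ) :
    (s.sym n).card = (s.card + n - 1).choose n := by
  classical
  rw [← Fintype.card_coe s, ← Sym.card_sym_eq_choose (α := {x // x ∈ s}) n,
    ← Finset.card_univ]
  symm
  apply Finset.card_bij (fun (a : Sym {x // x ∈ s} n) _ => a.map Subtype.val)
  · intro a _
    rw [Finset.mem_sym_iff]
    intro b hb
    obtain ⟨c, hc, rfl⟩ := Sym.mem_map.mp hb
    exact c.2
  · intro a _ b _ h
    exact Sym.map_injective Subtype.val_injective _ h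
  · intro b hb
    refine ⟨b.attach.map (fun x => ⟨x.1, Finset.mem_sym_iff.mp hb x.1 x.2⟩),
      Finset.mem_univ _, ?_⟩
    rw [Sym.map_map]
    exact b.attach_map_coe

lemma my_card_piAntidiag {α : Type*} [DecidableEq α] (s : Finset α) (n : ℕ) :
    (Finset.piAntidiag s n).card = (s.card + n - 1).choose n := by
  rw [← Finset.map_sym_eq_piAntidiag, Finset.card_map, my_card_sym]

lemma card_G (d m : ℕ) (hm : 1 ≤ m) :
    ((Finset.Nat.antidiagonalTuple d (2*m)).filter fun γ => ∀ i, γ i ≠ 1).card = Sdm d m := by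
  classical
  set G := (Finset.Nat.antidiagonalTuple d (2*m)).filter fun γ => ∀ i, γ i ≠ 1 with hG
  have memG : ∀ γ, γ ∈ G ↔ (∑ i, γ i = 2*m ∧ ∀ i, γ i ≠ 1) := by
    intro γ
    simp [hG, Finset.Nat.mem_antidiagonalTuple]
  have hbig : ∀ γ, γ ∈ G → ∀ i, γ i ≠ 0 → 2 ≤ γ i := by
    intro γ hγ i h0
    have := ((memG γ).mp hγ).2 i
    omega
  set t : Finset (Finset (Fin d)) :=
    Finset.univ.powerset.filter (fun s => 1 ≤ s.card ∧ s.card ≤ m) with ht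
  have hsum_supp : ∀ γ, γ ∈ G → ∑ i ∈ (Finset.univ.filter fun i => γ i ≠ 0), γ i = 2*m := by
    intro γ hγ
    rw [← ((memG γ).mp hγ).1]
    exact Finset.sum_filter_ne_zero _
  have hmap : ∀ γ ∈ G, (Finset.univ.filter fun i => γ i ≠ 0) ∈ t := by
    intro γ hγ
    set s := Finset.univ.filter fun i => γ i ≠ 0 with hs
    have hsub : ∀ i ∈ s, 2 ≤ γ i := by
      intro i hi
      exact hbig γ hγ i (by simpa [hs] using hi)
    have hsum' := hsum_supp γ hγ
    have h2k : 2 * s.card ≤ 2 * m := by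
      calc 2 * s.card = ∑ _i ∈ s, 2 := by rw [Finset.sum_const]; ring
      _ ≤ ∑ i ∈ s, γ i := Finset.sum_le_sum hsub
      _ = 2 * m := hsum'
    have hpos : 1 ≤ s.card := by
      rcases Finset.eq_empty_or_nonempty s with h | h
      · exfalso
        rw [← hs, h, Finset.sum_empty] at hsum'
        omega
      · exact h.card_pos
    simp only [ht, Finset.mem_filter, Finset.mem_powerset]
    exact ⟨Finset.subset_univ _, hpos, by omega⟩
  rw [Finset.card_eq_sum_card_fiberwise hmap]
  have hfib : ∀ s ∈ t, (G.filter fun γ => (Finset.univ.filter fun i => γ i ≠ 0) = s).card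
      = Nat.choose (2 * m - s.card - 1) (s.card - 1) := by
    intro s hs
    obtain ⟨hk1, hkm⟩ : 1 ≤ s.card ∧ s.card ≤ m := by
      simpa [ht, Finset.mem_powerset] using hs
    set k := s.card with hk
    clear_value k
    have hcard : (G.filter fun γ => (Finset.univ.filter fun i => γ i ≠ 0) = s).card
        = (Finset.piAntidiag s (2*m - 2*k)).card := by
      refine Finset.card_bij' (fun γ _ => fun i => if i ∈ s then γ i - 2 else 0)
        (fun δ _ => fun i => if i ∈ s then δ i + 2 else 0) ?_ ?_ ?_ ?_
      · -- forward membership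
        intro γ hγ
        rw [Finset.mem_filter] at hγ
        obtain ⟨hγG, hsupp⟩ := hγ
        have hmem : ∀ i, i ∈ s ↔ γ i ≠ 0 := by
          intro i; rw [← hsupp]; simp
        have h2 : ∀ i ∈ s, 2 ≤ γ i := fun i hi => hbig γ hγG i ((hmem i).mp hi)
        have hsum' : ∑ i ∈ s, γ i = 2*m := by
          rw [← hsupp] at *
          exact hsum_supp γ hγG
        rw [Finset.mem_piAntidiag]
        constructor
        · have e1 : ∑ i ∈ s, ((γ i - 2) + 2) = 2*m := by
            rw [← hsum']
            exact Finset.sum_congr rfl (fun i hi => by have := h2 i hi; omega)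
          rw [Finset.sum_add_distrib, Finset.sum_const, smul_eq_mul] at e1
          have e2 : ∑ i ∈ s, (if i ∈ s then γ i - 2 else 0) = ∑ i ∈ s, (γ i - 2) :=
            Finset.sum_congr rfl (fun i hi => if_pos hi)
          show ∑ i ∈ s, (if i ∈ s then γ i - 2 else 0) = 2*m - 2*k
          rw [e2]
          omega
        · intro i hi
          by_contra h
          simp [h] at hi
      · -- backward membership
        intro δ hδ
        rw [Finset.mem_piAntidiag] at hδ
        obtain ⟨hδs, hδ0⟩ := hδ
        rw [Finset.mem_filter]
        have hjs : ∑ i, (if i ∈ s then δ i + 2 else 0) = 2*m := by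
          rw [← Finset.sum_filter]
          rw [Finset.filter_mem_eq_inter, Finset.univ_inter]
          rw [Finset.sum_add_distrib, Finset.sum_const, smul_eq_mul, hδs]
          omega
        refine ⟨(memG _).mpr ⟨hjs, fun i => ?_⟩, ?_⟩
        · by_cases hi : i ∈ s <;> simp [hi]
        · ext i
          by_cases hi : i ∈ s <;> simp [hi]
      · -- left inverse
        intro γ hγ
        rw [Finset.mem_filter] at hγ
        obtain ⟨hγG, hsupp⟩ := hγ
        have hmem : ∀ i, i ∈ s ↔ γ i ≠ 0 := by
          intro i; rw [← hsupp]; simp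
        funext i
        by_cases hi : i ∈ s
        · have := hbig γ hγG i ((hmem i).mp hi)
          simp [hi]
          omega
        · have : γ i = 0 := by
            by_contra h
            exact hi ((hmem i).mpr h)
          simp [hi, this]
      · -- right inverse
        intro δ hδ
        rw [Finset.mem_piAntidiag] at hδ
        funext i
        by_cases hi : i ∈ s
        · simp [hi]
        · have : δ i = 0 := by
            by_contra h
            exact hi (hδ.2 i h)
          simp [hi, this]
    rw [hcard, my_card_piAntidiag, ← hk]
    have e1 : k + (2*m - 2*k) - 1 = 2*m - k - 1 := by clear * - hm hk1 hkm; omega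
    have e2 : 2*m - 2*k = (2*m - k - 1) - (k - 1) := by clear * - hm hk1 hkm; omega
    rw [e1, e2, Nat.choose_symm (by clear * - hm hk1 hkm; omega)]
  rw [Finset.sum_congr rfl hfib]
  -- regroup by cardinality
  have hmaps : ∀ s ∈ t, s.card ∈ Finset.Icc 1 (min d m) := by
    intro s hs
    obtain ⟨hsub, hk1, hkm⟩ : s ⊆ Finset.univ ∧ 1 ≤ s.card ∧ s.card ≤ m := by
      simpa [ht, Finset.mem_powerset] using hs
    have : s.card ≤ d := by
      simpa using Finset.card_le_card hsub
    simp only [Finset.mem_Icc, le_min_iff]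
    omega
  rw [← Finset.sum_fiberwise_of_maps_to hmaps
    (fun s => Nat.choose (2 * m - s.card - 1) (s.card - 1))]
  unfold Sdm
  refine Finset.sum_congr rfl fun k hk => ?_
  rw [Finset.mem_Icc] at hk
  have hfilter : t.filter (fun s => s.card = k) = Finset.powersetCard k Finset.univ := by
    ext s
    simp only [ht, Finset.mem_filter, Finset.mem_powerset, Finset.mem_powersetCard]
    constructor
    · rintro ⟨⟨h1, h2, h3⟩, h4⟩
      exact ⟨h1, h4⟩
    · rintro ⟨h1, rfl⟩
      refine ⟨⟨h1, by omega, by omega⟩, rfl⟩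
  calc ∑ s ∈ t.filter (fun s => s.card = k), Nat.choose (2 * m - s.card - 1) (s.card - 1)
      = ∑ _s ∈ t.filter (fun s => s.card = k), Nat.choose (2 * m - k - 1) (k - 1) := by
        refine Finset.sum_congr rfl fun s hs => ?_
        rw [Finset.mem_filter] at hs
        rw [hs.2]
    _ = (t.filter (fun s => s.card = k)).card * Nat.choose (2 * m - k - 1) (k - 1) := by
        rw [Finset.sum_const, smul_eq_mul]
    _ = Nat.choose d k * Nat.choose (2 * m - k - 1) (k - 1) := by
        rw [hfilter, Finset.card_powersetCard, Finset.card_univ, Fintype.card_fin]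

lemma exists_le_sum {d : ℕ} (γ : Fin d → ℕ) (n : ℕ) (h : n ≤ ∑ i, γ i) :
    ∃ α : Fin d → ℕ, (∀ i, α i ≤ γ i) ∧ ∑ i, α i = n := by
  induction n with
  | zero => exact ⟨0, fun i => Nat.zero_le _, by simp⟩
  | succ n ih =>
    obtain ⟨α, hle, hsum⟩ := ih (by omega)
    have : ∃ i, α i < γ i := by
      by_contra hc
      push_neg at hc
      have : ∑ i, γ i ≤ ∑ i, α i := Finset.sum_le_sum fun i _ => hc i
      omega
    obtain ⟨i, hi⟩ := this
    refine ⟨Function.update α i (α i + 1), fun j => ?_, ?_⟩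
    · rcases eq_or_ne j i with rfl | hj
      · rw [Function.update_self]; omega
      · rw [Function.update_of_ne hj]; exact hle j
    · rw [Finset.sum_update_of_mem (Finset.mem_univ i)]
      have := Finset.sum_eq_sum_sdiff_singleton_add (Finset.mem_univ i) α
      omega

lemma main_est (d m : ℕ) (hd : 1 ≤ d) (hm : 1 ≤ m) :
    (((Finset.Nat.antidiagonalTuple d (2*m)).filter fun γ => ∀ i, γ i ≠ 1).card : ℝ)
      ≤ ((Bdm d m).card : ℝ) ∧
    ((Bdm d m).card : ℝ) ≤ Real.exp (2 * m) *
      (((Finset.Nat.antidiagonalTuple d (2*m)).filter fun γ => ∀ i, γ i ≠ 1).card : ℝ) := by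
  classical
  set G := (Finset.Nat.antidiagonalTuple d (2*m)).filter fun γ => ∀ i, γ i ≠ 1 with hG
  have memG : ∀ γ, γ ∈ G ↔ (∑ i, γ i = 2*m ∧ ∀ i, γ i ≠ 1) := by
    intro γ; simp [hG, Finset.Nat.mem_antidiagonalTuple]
  have memB : ∀ p : (Fin d → ℕ) × (Fin d → ℕ), p ∈ Bdm d m ↔
      (∑ i, p.1 i = m ∧ ∑ i, p.2 i = m ∧ ∀ i, p.1 i + p.2 i ≠ 1) := by
    intro p
    simp only [Bdm, Finset.mem_filter, Finset.mem_product, Finset.Nat.mem_antidiagonalTuple]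
    tauto
  set f : ((Fin d → ℕ) × (Fin d → ℕ)) → (Fin d → ℕ) := fun p i => p.1 i + p.2 i with hf
  have hmaps : ∀ p ∈ Bdm d m, f p ∈ G := by
    intro p hp
    obtain ⟨h1, h2, h3⟩ := (memB p).mp hp
    rw [memG]
    constructor
    · rw [hf]
      simp only
      rw [Finset.sum_add_distrib, h1, h2]
      ring
    · exact h3
  have hsurj : ∀ γ ∈ G, ∃ p ∈ Bdm d m, f p = γ := by
    intro γ hγ
    obtain ⟨hsum, hne1⟩ := (memG γ).mp hγ
    obtain ⟨α, hle, hα⟩ := exists_le_sum γ m (by omega)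
    refine ⟨(α, fun i => γ i - α i), ?_, ?_⟩
    · rw [memB]
      refine ⟨hα, ?_, ?_⟩
      · have e1 : ∑ i, (α i + (γ i - α i)) = 2*m := by
          rw [← hsum]
          exact Finset.sum_congr rfl fun i _ => by have := hle i; omega
        rw [Finset.sum_add_distrib, hα] at e1
        simp only
        omega
      · intro i
        have := hle i
        have := hne1 i
        simp only
        omega
    · funext i
      simp only [hf]
      have := hle i
      omega
  constructor
  · -- lower bound
    have : G.card ≤ (Bdm d m).card := by
      apply Finset.card_le_card_of_surjOn f
      intro γ hγ
      obtain ⟨p, hp, hfp⟩ := hsurj γ hγ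
      exact ⟨p, hp, hfp⟩
    exact_mod_cast this
  · -- upper bound
    have hcard : (Bdm d m).card = ∑ γ ∈ G, ((Bdm d m).filter fun p => f p = γ).card :=
      Finset.card_eq_sum_card_fiberwise hmaps
    have hfiber : ∀ γ ∈ G, (((Bdm d m).filter fun p => f p = γ).card : ℝ) ≤ Real.exp (2*m) := by
      intro γ hγ
      obtain ⟨hsum, hne1⟩ := (memG γ).mp hγ
      have h1 : ((Bdm d m).filter fun p => f p = γ).card ≤
          (Fintype.piFinset fun i => Finset.range (γ i + 1)).card := by
        apply Finset.card_le_card_of_injOn Prod.fst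
        · intro p hp
          rw [Finset.mem_coe, Finset.mem_filter] at hp
          rw [Finset.mem_coe, Fintype.mem_piFinset]
          intro i
          rw [Finset.mem_range]
          have : p.1 i + p.2 i = γ i := congrFun hp.2 i
          omega
        · intro p hp q hq hpq
          rw [Finset.mem_coe, Finset.mem_filter] at hp hq
          have hp2 := hp.2
          have hq2 := hq.2
          ext i
          · rw [hpq]
          · have e1 : p.1 i + p.2 i = γ i := congrFun hp2 i
            have e2 : q.1 i + q.2 i = γ i := congrFun hq2 i
            have e3 : p.1 i = q.1 i := congrFun hpq i
            omega
      have h2 : ((Fintype.piFinset fun i => Finset.range (γ i + 1)).card : ℝ)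
          ≤ Real.exp (2*m) := by
        rw [Fintype.card_piFinset]
        simp only [Finset.card_range]
        push_cast
        calc (∏ i, ((γ i : ℝ) + 1)) ≤ ∏ i, Real.exp (γ i) := by
              apply Finset.prod_le_prod
              · intro i _; positivity
              · intro i _
                have := Real.add_one_le_exp (γ i : ℝ)
                linarith
          _ = Real.exp (∑ i, (γ i : ℝ)) := (Real.exp_sum _ _).symm
          _ = Real.exp (2*m) := by
              rw [← Nat.cast_sum, hsum]
              push_cast
              ring
      calc (((Bdm d m).filter fun p => f p = γ).card : ℝ)
          ≤ ((Fintype.piFinset fun i => Finset.range (γ i + 1)).card : ℝ) := by exact_mod_cast h1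
        _ ≤ Real.exp (2*m) := h2
    calc ((Bdm d m).card : ℝ) = ∑ γ ∈ G, (((Bdm d m).filter fun p => f p = γ).card : ℝ) := by
          rw [hcard]; push_cast; rfl
      _ ≤ ∑ _γ ∈ G, Real.exp (2*m) := Finset.sum_le_sum hfiber
      _ = G.card * Real.exp (2*m) := by rw [Finset.sum_const]; simp [mul_comm]
      _ = Real.exp (2*m) * G.card := by ring

theorem card_Bdm_bounds (d m : ℕ) (hd : 1 ≤ d) (hm : 1 ≤ m) :
    (Sdm d m : ℝ) ≤ ((Bdm d m).card : ℝ) ∧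
    ((Bdm d m).card : ℝ) ≤ Real.exp (2 * m) * (Sdm d m : ℝ) := by
  obtain ⟨h1, h2⟩ := main_est d m hd hm
  rw [card_G d m hm] at h1 h2
  exact ⟨h1, h2⟩
end

section
/- Fix a positive integer n. There exists a polynomial p with integer coefficients of degree 2n, depending only on n, such that for every positive integer d, the number of bad tuples (j¹, j², j³, j⁴) with j^1_0 = j^2_0 = j^3_0 = j^4_0 = 1 equals p(d); moreover, this number is at most 3^n · d^{2n} for every d ≥ 1. -/
/-!
STATEMENT 5: Fix a positive integer `n`. There exists a polynomial `p` with integer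
coefficients of degree `2n`, depending only on `n`, such that for every positive integer `d`,
the number of bad tuples `(j¹, j², j³, j⁴)` (sequences of length `n+1` with entries in
`{1, …, d}`) with `j^k_0 = 1` for all `k` equals `p(d)`; moreover this number is at most
`3^n · d^{2n}`.
-/

/-- At one step, the four pairs of consecutive values can be split into two disjoint pairs
that agree both at time `i` and at time `i+1`. -/
def StepOK (u v : Fin 4 → ℕ) : Prop :=
  ∃ p q r s : Fin 4, ({p, q, r, s} : Finset (Fin 4)) = Finset.univ ∧
    u p = u q ∧ v p = v q ∧ u r = u s ∧ v r = v s

/-- A tuple of four sequences `j k : Fin (n+1) → ℕ` is bad if the pairing condition holds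
at every step `i ∈ {0, …, n−1}`. -/
def IsBad (n : ℕ) (j : Fin 4 → Fin (n + 1) → ℕ) : Prop :=
  ∀ i : Fin n, StepOK (fun k => j k i.castSucc) (fun k => j k i.succ)

/-- The number of bad tuples with entries in `{1, …, d}` starting with `j^k_0 = 1`
for all `k ∈ {1,2,3,4}`. -/
noncomputable def badCountOne (n d : ℕ) : ℕ :=
  Nat.card {j : Fin 4 → Fin (n + 1) → ℕ //
    (∀ k i, j k i ∈ Finset.Icc 1 d) ∧ IsBad n j ∧ (∀ k, j k 0 = 1)}

namespace BadAux

open Finset Polynomial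

attribute [local instance] Classical.propDecidable

theorem stepOK_iff (u v : Fin 4 → ℕ) : StepOK u v ↔
    (u 0 = u 1 ∧ u 2 = u 3 ∧ v 0 = v 1 ∧ v 2 = v 3) ∨
    (u 0 = u 2 ∧ u 1 = u 3 ∧ v 0 = v 2 ∧ v 1 = v 3) ∨
    (u 0 = u 3 ∧ u 1 = u 2 ∧ v 0 = v 3 ∧ v 1 = v 2) := by
  constructor
  · rintro ⟨p, q, r, s, huniv, h1, h2, h3, h4⟩
    fin_cases p <;> fin_cases q <;> fin_cases r <;> fin_cases s <;>
      first
        | exact absurd huniv (by decide)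
        | (simp only [show (⟨0, by omega⟩ : Fin 4) = 0 from rfl,
            show (⟨1, by omega⟩ : Fin 4) = 1 from rfl,
            show (⟨2, by omega⟩ : Fin 4) = 2 from rfl,
            show (⟨3, by omega⟩ : Fin 4) = 3 from rfl] at h1 h2 h3 h4; omega)
  · rintro (⟨a, b, c, e⟩ | ⟨a, b, c, e⟩ | ⟨a, b, c, e⟩)
    · exact ⟨0, 1, 2, 3, by decide, a, c, b, e⟩
    · exact ⟨0, 2, 1, 3, by decide, a, c, b, e⟩
    · exact ⟨0, 3, 1, 2, by decide, a, c, b, e⟩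

/-- All four values equal. -/
def AllEq (v : Fin 4 → ℕ) : Prop := ∀ k, v k = v 0

lemma allEq_iff (v : Fin 4 → ℕ) : AllEq v ↔ v 1 = v 0 ∧ v 2 = v 0 ∧ v 3 = v 0 := by
  constructor
  · intro h; exact ⟨h 1, h 2, h 3⟩
  · rintro ⟨h1, h2, h3⟩ k
    fin_cases k
    · rfl
    · exact h1
    · exact h2
    · exact h3

lemma stepOK_self_right {u v : Fin 4 → ℕ} (h : StepOK u v) : StepOK v v := by
  obtain ⟨p, q, r, s, hu, h1, h2, h3, h4⟩ := h
  exact ⟨p, q, r, s, hu, h2, h2, h4, h4⟩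

lemma stepOK_of_allEq_right {u v : Fin 4 → ℕ} (hu : StepOK u u) (hv : AllEq v) :
    StepOK u v := by
  obtain ⟨p, q, r, s, hun, h1, _, h3, _⟩ := hu
  exact ⟨p, q, r, s, hun, h1, by rw [hv p, hv q], h3, by rw [hv r, hv s]⟩

lemma univ_facts : ∀ a b c e : Fin 4, ({a, b, c, e} : Finset (Fin 4)) = Finset.univ →
    (a ≠ b ∧ a ≠ c ∧ a ≠ e ∧ b ≠ c ∧ b ≠ e ∧ c ≠ e) ∧
    (∀ k : Fin 4, k = a ∨ k = b ∨ k = c ∨ k = e) := by decide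

/-- The box `{1,…,d}⁴`. -/
def box (d : ℕ) : Finset (Fin 4 → ℕ) := Fintype.piFinset fun _ => Finset.Icc 1 d

lemma mem_box {d : ℕ} {v : Fin 4 → ℕ} : v ∈ box d ↔ ∀ k, v k ∈ Finset.Icc 1 d :=
  Fintype.mem_piFinset

lemma card_offdiag (d : ℕ) :
    (((Finset.Icc 1 d) ×ˢ (Finset.Icc 1 d)).filter fun p => p.1 ≠ p.2).card = d ^ 2 - d := by
  set T := (Finset.Icc 1 d) ×ˢ (Finset.Icc 1 d) with hT
  have htot : T.card = d ^ 2 := by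
    simp [hT, Finset.card_product, sq]
  have hdiag : (T.filter fun p => p.1 = p.2).card = d := by
    rw [show d = (Finset.Icc 1 d).card by simp]
    apply Finset.card_nbij' (fun p => p.1) (fun a => (a, a))
    · intro p hp
      simp only [Finset.mem_coe, hT, mem_filter, mem_product] at hp
      exact hp.1.1
    · intro a ha
      rw [Finset.mem_coe] at ha
      simp [hT, Finset.mem_Icc.mp ha]
    · intro p hp
      simp only [Finset.mem_coe, mem_filter] at hp
      rcases p with ⟨x, y⟩
      simp_all
    · intro a _; rfl
  have hsplit := Finset.card_filter_add_card_filter_not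
    (s := T) (p := fun p => p.1 = p.2)
  rw [← htot]
  simp only [ne_eq, Finset.filter_congr_decidable] at hsplit hdiag ⊢
  omega

/-- Counting vectors in the box with a fixed pair pattern and distinct pair values. -/
lemma card_pattern (d : ℕ) (a b c e : Fin 4)
    (h : ({a, b, c, e} : Finset (Fin 4)) = Finset.univ) :
    ((box d).filter fun v => v a = v b ∧ v c = v e ∧ v a ≠ v c).card = d ^ 2 - d := by
  obtain ⟨⟨hab, hac, hae, hbc, hbe, hce⟩, hcov⟩ := univ_facts a b c e h
  have hca : ¬(c = a ∨ c = b) := by rintro (rfl | rfl); exacts [hac rfl, hbc rfl]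
  have hea : ¬(e = a ∨ e = b) := by rintro (rfl | rfl); exacts [hae rfl, hbe rfl]
  rw [← card_offdiag d]
  apply Finset.card_nbij' (fun v => (v a, v c))
    (fun p => fun k => if k = a ∨ k = b then p.1 else p.2)
  · intro v hv
    simp only [Finset.mem_coe, mem_filter, mem_box] at hv
    simp only [Finset.mem_coe, mem_filter, mem_product]
    exact ⟨⟨hv.1 a, hv.1 c⟩, hv.2.2.2⟩
  · intro p hp
    simp only [Finset.mem_coe, mem_filter, mem_product] at hp
    simp only [Finset.mem_coe, mem_filter, mem_box]
    refine ⟨fun k => ?_, ?_, ?_, ?_⟩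
    · by_cases hk : k = a ∨ k = b <;> simp [hk, hp.1.1, hp.1.2]
    · simp
    · simp [hca, hea]
    · simp [hca, hp.2]
  · intro v hv
    simp only [Finset.mem_coe, mem_filter, mem_box] at hv
    funext k
    dsimp only
    by_cases hk : k = a ∨ k = b
    · rw [if_pos hk]
      rcases hk with rfl | rfl
      · rfl
      · exact hv.2.1
    · rw [if_neg hk]
      push_neg at hk
      rcases hcov k with rfl | rfl | rfl | rfl
      · exact absurd rfl hk.1
      · exact absurd rfl hk.2
      · rfl
      · exact hv.2.2.1
  · intro p hp
    simp [hca]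

/-- Number of all-equal extensions: `d`. -/
lemma card_ext_allEq (d : ℕ) (u : Fin 4 → ℕ) (hu : StepOK u u) :
    ((box d).filter fun v => StepOK u v ∧ AllEq v).card = d := by
  have : ((box d).filter fun v => StepOK u v ∧ AllEq v)
      = (box d).filter fun v => AllEq v := by
    apply Finset.filter_congr
    intro v _
    constructor
    · exact fun hv => hv.2
    · exact fun hv => ⟨stepOK_of_allEq_right hu hv, hv⟩
  rw [this]
  have hcard : ((box d).filter fun v => AllEq v).card = (Finset.Icc 1 d).card := by
    apply Finset.card_nbij' (fun v => v 0) (fun x => fun _ => x)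
    · intro v hv
      simp only [Finset.mem_coe, mem_filter, mem_box] at hv
      exact hv.1 0
    · intro x hx
      simp only [Finset.mem_coe, mem_filter, mem_box]
      exact ⟨fun _ => hx, fun _ => rfl⟩
    · intro v hv
      simp only [Finset.mem_coe, mem_filter, mem_box] at hv
      funext k
      exact (hv.2 k).symm
    · intro x _; rfl
  rw [hcard]
  simp

/-- Extensions from an all-equal state that are not all-equal: `3(d²−d)`. -/
lemma card_ext_ne_of_allEq (d : ℕ) (u : Fin 4 → ℕ) (hu : AllEq u) :
    ((box d).filter fun v => StepOK u v ∧ ¬ AllEq v).card = 3 * (d ^ 2 - d) := by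
  have hu1 : u 1 = u 0 := hu 1
  have hu2 : u 2 = u 0 := hu 2
  have hu3 : u 3 = u 0 := hu 3
  have key : ∀ v : Fin 4 → ℕ, (StepOK u v ∧ ¬ AllEq v) ↔
      ((v 0 = v 1 ∧ v 2 = v 3 ∧ v 0 ≠ v 2) ∨
       (v 0 = v 2 ∧ v 1 = v 3 ∧ v 0 ≠ v 1) ∨
       (v 0 = v 3 ∧ v 1 = v 2 ∧ v 0 ≠ v 1)) := by
    intro v
    rw [stepOK_iff, allEq_iff]
    omega
  rw [Finset.filter_congr (fun v _ => key v), Finset.filter_or, Finset.filter_or]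
  rw [Finset.card_union_of_disjoint, Finset.card_union_of_disjoint]
  · rw [card_pattern d 0 1 2 3 (by decide), card_pattern d 0 2 1 3 (by decide),
      card_pattern d 0 3 1 2 (by decide)]
    ring
  · simp only [Finset.disjoint_left, mem_filter]
    rintro v ⟨_, h1⟩ ⟨_, h2⟩
    omega
  · simp only [Finset.disjoint_left, mem_filter, Finset.mem_union]
    rintro v ⟨_, h1⟩ h2
    rcases h2 with ⟨_, h2⟩ | ⟨_, h2⟩ <;> omega

/-- Extensions from a paired, not all-equal state that are not all-equal: `d²−d`. -/
lemma card_ext_ne_of_ne (d : ℕ) (u : Fin 4 → ℕ) (hu : StepOK u u) (hne : ¬ AllEq u) :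
    ((box d).filter fun v => StepOK u v ∧ ¬ AllEq v).card = d ^ 2 - d := by
  rw [allEq_iff] at hne
  rw [stepOK_iff] at hu
  rcases hu with ⟨h1, h2, -⟩ | ⟨h1, h2, -⟩ | ⟨h1, h2, -⟩
  · have key : ∀ v : Fin 4 → ℕ, (StepOK u v ∧ ¬ AllEq v) ↔
        (v 0 = v 1 ∧ v 2 = v 3 ∧ v 0 ≠ v 2) := by
      intro v; rw [stepOK_iff, allEq_iff]; omega
    rw [Finset.filter_congr (fun v _ => key v)]
    exact card_pattern d 0 1 2 3 (by decide)
  · have key : ∀ v : Fin 4 → ℕ, (StepOK u v ∧ ¬ AllEq v) ↔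
        (v 0 = v 2 ∧ v 1 = v 3 ∧ v 0 ≠ v 1) := by
      intro v; rw [stepOK_iff, allEq_iff]; omega
    rw [Finset.filter_congr (fun v _ => key v)]
    exact card_pattern d 0 2 1 3 (by decide)
  · have key : ∀ v : Fin 4 → ℕ, (StepOK u v ∧ ¬ AllEq v) ↔
        (v 0 = v 3 ∧ v 1 = v 2 ∧ v 0 ≠ v 1) := by
      intro v; rw [stepOK_iff, allEq_iff]; omega
    rw [Finset.filter_congr (fun v _ => key v)]
    exact card_pattern d 0 3 1 2 (by decide)

/-- The finset of bad tuples. -/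
noncomputable def S (n d : ℕ) : Finset (Fin 4 → Fin (n + 1) → ℕ) :=
  (Fintype.piFinset fun _ : Fin 4 => Fintype.piFinset fun _ : Fin (n + 1) => Finset.Icc 1 d).filter
    fun j => IsBad n j ∧ ∀ k, j k 0 = 1

lemma mem_S {n d : ℕ} {j : Fin 4 → Fin (n + 1) → ℕ} :
    j ∈ S n d ↔ (∀ k i, j k i ∈ Finset.Icc 1 d) ∧ IsBad n j ∧ (∀ k, j k 0 = 1) := by
  simp only [S, mem_filter, Fintype.mem_piFinset]

lemma badCountOne_eq (n d : ℕ) : badCountOne n d = (S n d).card := by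
  rw [badCountOne, ← Nat.card_eq_finsetCard]
  exact Nat.card_congr (Equiv.subtypeEquivRight fun j => mem_S.symm)

/-- Endpoint of a path. -/
def endv (n : ℕ) (j : Fin 4 → Fin (n + 1) → ℕ) : Fin 4 → ℕ := fun k => j k (Fin.last n)

lemma endv_paired {n d : ℕ} {j : Fin 4 → Fin (n + 1) → ℕ} (hj : j ∈ S n d) :
    StepOK (endv n j) (endv n j) := by
  rw [mem_S] at hj
  cases n with
  | zero =>
      refine ⟨0, 1, 2, 3, by decide, ?_, ?_, ?_, ?_⟩ <;>
        simp [endv, show (Fin.last 0) = 0 from rfl, hj.2.2]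
  | succ m =>
      have := hj.2.1 (Fin.last m)
      have hsucc : (Fin.last m).succ = Fin.last (m + 1) := rfl
      rw [hsucc] at this
      exact stepOK_self_right this

/-- Restriction of a path of length `n+1` to length `n`. -/
def res {n : ℕ} (j : Fin 4 → Fin (n + 2) → ℕ) : Fin 4 → Fin (n + 1) → ℕ :=
  fun k i => j k i.castSucc

lemma res_mem {n d : ℕ} {j : Fin 4 → Fin (n + 2) → ℕ} (hj : j ∈ S (n + 1) d) :
    res j ∈ S n d := by
  rw [mem_S] at hj ⊢
  refine ⟨fun k i => hj.1 k _, fun i => ?_, fun k => hj.2.2 k⟩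
  have := hj.2.1 i.castSucc
  have hs : i.castSucc.succ = i.succ.castSucc := (Fin.succ_castSucc i).symm ▸ rfl
  rw [show (fun k => j k i.castSucc.succ) = (fun k => res j k i.succ) from
    funext fun k => by rw [res, ← Fin.succ_castSucc]] at this
  exact this

lemma stepOK_res_end {n d : ℕ} {j : Fin 4 → Fin (n + 2) → ℕ} (hj : j ∈ S (n + 1) d) :
    StepOK (endv n (res j)) (endv (n + 1) j) := by
  rw [mem_S] at hj
  have := hj.2.1 (Fin.last n)
  have h1 : (fun k => j k (Fin.last n).castSucc) = endv n (res j) := rfl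
  have h2 : (fun k => j k (Fin.last n).succ) = endv (n + 1) j := by
    funext k; rw [endv, Fin.succ_last]
  rwa [h1, h2] at this

/-- Extension of a path by one step. -/
def ext {n : ℕ} (j : Fin 4 → Fin (n + 1) → ℕ) (v : Fin 4 → ℕ) : Fin 4 → Fin (n + 2) → ℕ :=
  fun k => Fin.snoc (j k) (v k)

lemma res_ext {n : ℕ} (j : Fin 4 → Fin (n + 1) → ℕ) (v : Fin 4 → ℕ) : res (ext j v) = j := by
  funext k i
  simp [res, ext, Fin.snoc_castSucc]

lemma endv_ext {n : ℕ} (j : Fin 4 → Fin (n + 1) → ℕ) (v : Fin 4 → ℕ) :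
    endv (n + 1) (ext j v) = v := by
  funext k
  simp [endv, ext, Fin.snoc_last]

lemma ext_res {n : ℕ} (j : Fin 4 → Fin (n + 2) → ℕ) : ext (res j) (endv (n + 1) j) = j := by
  funext k i
  exact congrFun (Fin.snoc_init_self (j k)) i

lemma ext_mem {n d : ℕ} {j : Fin 4 → Fin (n + 1) → ℕ} {v : Fin 4 → ℕ}
    (hj : j ∈ S n d) (hv : v ∈ box d) (hstep : StepOK (endv n j) v) :
    ext j v ∈ S (n + 1) d := by
  rw [mem_S] at hj ⊢
  rw [mem_box] at hv
  refine ⟨?_, ?_, ?_⟩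
  · intro k i
    refine Fin.lastCases ?_ (fun i' => ?_) i
    · simpa [ext, Fin.snoc_last] using hv k
    · simpa [ext, Fin.snoc_castSucc] using hj.1 k i'
  · intro i
    refine Fin.lastCases ?_ (fun i' => ?_) i
    · have h1 : (fun k => ext j v k (Fin.last n).castSucc) = endv n j := by
        funext k; simp [ext, Fin.snoc_castSucc, endv]
      have h2 : (fun k => ext j v k (Fin.last n).succ) = v := by
        funext k
        rw [Fin.succ_last]
        simp [ext, Fin.snoc_last]
      rw [h1, h2]
      exact hstep
    · have h1 : (fun k => ext j v k i'.castSucc.castSucc) = fun k => j k i'.castSucc := by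
        funext k; simp [ext, Fin.snoc_castSucc]
      have h2 : (fun k => ext j v k i'.castSucc.succ) = fun k => j k i'.succ := by
        funext k
        rw [Fin.succ_castSucc]
        simp only [ext, Fin.snoc_castSucc]
      rw [h1, h2]
      exact hj.2.1 i'
  · intro k
    have h0 : ext j v k 0 = j k 0 := by
      have h00 : ((0 : Fin (n + 1)).castSucc) = (0 : Fin (n + 2)) := by
        simp
      rw [← h00]
      simp only [ext, Fin.snoc_castSucc]
    rw [h0]
    exact hj.2.2 k

/-- The fiber of the restriction map over `j0`, intersected with an endpoint condition,
has the same cardinality as the corresponding set of one-step extensions. -/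
lemma card_fiber {n d : ℕ} (Q : (Fin 4 → ℕ) → Prop) {j0 : Fin 4 → Fin (n + 1) → ℕ}
    (hj0 : j0 ∈ S n d) :
    (((S (n + 1) d).filter fun j => Q (endv (n + 1) j) ∧ res j = j0).card) =
    ((box d).filter fun v => StepOK (endv n j0) v ∧ Q v).card := by
  apply Finset.card_nbij' (fun j => endv (n + 1) j) (fun v => ext j0 v)
  · intro j hj
    simp only [Finset.mem_coe, mem_filter] at hj
    obtain ⟨hjS, hQ, hres⟩ := hj
    simp only [Finset.mem_coe, mem_filter, mem_box]
    refine ⟨?_, ?_, hQ⟩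
    · intro k
      exact (mem_S.mp hjS).1 k _
    · have := stepOK_res_end hjS
      rwa [hres] at this
  · intro v hv
    simp only [Finset.mem_coe, mem_filter, mem_box] at hv
    simp only [Finset.mem_coe, mem_filter]
    exact ⟨ext_mem hj0 (mem_box.mpr hv.1) hv.2.1, by rw [endv_ext]; exact hv.2.2,
      res_ext j0 v⟩
  · intro j hj
    simp only [Finset.mem_coe, mem_filter] at hj
    rw [← hj.2.2]
    exact ext_res j
  · intro v _
    exact endv_ext j0 v

lemma card_fiber_not {n d : ℕ} {j0 : Fin 4 → Fin (n + 1) → ℕ}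
    (hj0 : j0 ∈ S n d) :
    (((S (n + 1) d).filter fun j => ¬ AllEq (endv (n + 1) j) ∧ res j = j0).card) =
    ((box d).filter fun v => StepOK (endv n j0) v ∧ ¬ AllEq v).card := by
  apply Finset.card_nbij' (fun j => endv (n + 1) j) (fun v => ext j0 v)
  · intro j hj
    simp only [Finset.mem_coe, mem_filter] at hj
    obtain ⟨hjS, hQ, hres⟩ := hj
    simp only [Finset.mem_coe, mem_filter, mem_box]
    refine ⟨?_, ?_, hQ⟩
    · intro k
      exact (mem_S.mp hjS).1 k _
    · have := stepOK_res_end hjS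
      rwa [hres] at this
  · intro v hv
    simp only [Finset.mem_coe, mem_filter, mem_box] at hv
    simp only [Finset.mem_coe, mem_filter]
    exact ⟨ext_mem hj0 (mem_box.mpr hv.1) hv.2.1, by rw [endv_ext]; exact hv.2.2,
      res_ext j0 v⟩
  · intro j hj
    simp only [Finset.mem_coe, mem_filter] at hj
    rw [← hj.2.2]
    exact ext_res j
  · intro v _
    exact endv_ext j0 v

noncomputable def SA (n d : ℕ) : Finset (Fin 4 → Fin (n + 1) → ℕ) :=
  (S n d).filter fun j => AllEq (endv n j)

noncomputable def SB (n d : ℕ) : Finset (Fin 4 → Fin (n + 1) → ℕ) :=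
  (S n d).filter fun j => ¬ AllEq (endv n j)

lemma card_S_split (n d : ℕ) : (SA n d).card + (SB n d).card = (S n d).card :=
  Finset.card_filter_add_card_filter_not _

lemma card_SA_succ (n d : ℕ) : (SA (n + 1) d).card = d * (S n d).card := by
  have hmap : ∀ j ∈ SA (n + 1) d, res j ∈ S n d := by
    intro j hj
    exact res_mem (Finset.mem_filter.mp hj).1
  rw [Finset.card_eq_sum_card_fiberwise hmap]
  have : ∀ j0 ∈ S n d, ((SA (n + 1) d).filter fun j => res j = j0).card = d := by
    intro j0 hj0
    have : (SA (n + 1) d).filter (fun j => res j = j0) =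
        (S (n + 1) d).filter fun j => AllEq (endv (n + 1) j) ∧ res j = j0 := by
      rw [SA, Finset.filter_filter]
    rw [this, card_fiber AllEq hj0, card_ext_allEq d _ (endv_paired hj0)]
  rw [Finset.sum_congr rfl this, Finset.sum_const, smul_eq_mul, mul_comm]

lemma card_SB_succ (n d : ℕ) :
    (SB (n + 1) d).card = 3 * (d ^ 2 - d) * (SA n d).card + (d ^ 2 - d) * (SB n d).card := by
  have hmap : ∀ j ∈ SB (n + 1) d, res j ∈ S n d := by
    intro j hj
    exact res_mem (Finset.mem_filter.mp hj).1
  rw [Finset.card_eq_sum_card_fiberwise hmap]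
  have key : ∀ j0 ∈ S n d, ((SB (n + 1) d).filter fun j => res j = j0).card =
      if AllEq (endv n j0) then 3 * (d ^ 2 - d) else (d ^ 2 - d) := by
    intro j0 hj0
    have : (SB (n + 1) d).filter (fun j => res j = j0) =
        (S (n + 1) d).filter fun j => ¬ AllEq (endv (n + 1) j) ∧ res j = j0 := by
      rw [SB, Finset.filter_filter]
    rw [this, card_fiber_not hj0]
    by_cases hA : AllEq (endv n j0)
    · rw [if_pos hA, card_ext_ne_of_allEq d _ hA]
    · rw [if_neg hA, card_ext_ne_of_ne d _ (endv_paired hj0) hA]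
  rw [Finset.sum_congr rfl key, Finset.sum_ite, Finset.sum_const, Finset.sum_const,
    smul_eq_mul, smul_eq_mul]
  have h1 : (S n d).filter (fun j0 => AllEq (endv n j0)) = SA n d := rfl
  have h2 : (S n d).filter (fun j0 => ¬ AllEq (endv n j0)) = SB n d := rfl
  rw [h1, h2]
  ring

lemma S_zero (d : ℕ) (hd : 1 ≤ d) : S 0 d = {fun _ _ => 1} := by
  ext j
  rw [mem_S, Finset.mem_singleton]
  constructor
  · rintro ⟨_, _, h0⟩
    funext k i
    have : i = 0 := by omega
    rw [this, h0 k]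
  · rintro rfl
    exact ⟨fun k i => by simp [hd], fun i => i.elim0, fun k => rfl⟩

lemma card_SA_zero (d : ℕ) (hd : 1 ≤ d) : (SA 0 d).card = 1 := by
  have : SA 0 d = S 0 d := by
    rw [SA, Finset.filter_eq_self]
    intro j hj
    rw [S_zero d hd, Finset.mem_singleton] at hj
    subst hj
    intro k
    rfl
  rw [this, S_zero d hd, Finset.card_singleton]

lemma card_SB_zero (d : ℕ) (hd : 1 ≤ d) : (SB 0 d).card = 0 := by
  have h := card_S_split 0 d
  rw [card_SA_zero d hd, S_zero d hd, Finset.card_singleton] at h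
  omega

/-- Numeric recursion mirroring the counts. -/
def ab (d : ℕ) : ℕ → ℕ × ℕ
  | 0 => (1, 0)
  | i + 1 =>
      ((ab d i).1 * d + (ab d i).2 * d,
       3 * (d ^ 2 - d) * (ab d i).1 + (d ^ 2 - d) * (ab d i).2)

lemma card_eq_ab (d : ℕ) (hd : 1 ≤ d) :
    ∀ n, (SA n d).card = (ab d n).1 ∧ (SB n d).card = (ab d n).2 := by
  intro n
  induction n with
  | zero => exact ⟨card_SA_zero d hd, card_SB_zero d hd⟩
  | succ m ih =>
      constructor
      · rw [card_SA_succ, ab]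
        rw [← card_S_split m d, ih.1, ih.2]
        ring
      · rw [card_SB_succ, ab, ih.1, ih.2]

lemma badCountOne_eq_ab (n d : ℕ) (hd : 1 ≤ d) :
    badCountOne n d = (ab d n).1 + (ab d n).2 := by
  rw [badCountOne_eq, ← card_S_split, (card_eq_ab d hd n).1, (card_eq_ab d hd n).2]

/-- Polynomial recursion mirroring the counts. -/
noncomputable def PP : ℕ → Polynomial ℤ × Polynomial ℤ
  | 0 => (1, 0)
  | i + 1 =>
      ((PP i).1 * X + (PP i).2 * X,
       (X ^ 2 - X) * (3 * (PP i).1 + (PP i).2))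

lemma ab_eval (d : ℕ) (hd : 1 ≤ d) :
    ∀ n, ((ab d n).1 : ℤ) = (PP n).1.eval (d : ℤ) ∧
      ((ab d n).2 : ℤ) = (PP n).2.eval (d : ℤ) := by
  have hdd : d ≤ d ^ 2 := by nlinarith
  intro n
  induction n with
  | zero => simp [ab, PP]
  | succ m ih =>
      obtain ⟨ih1, ih2⟩ := ih
      constructor
      · simp only [ab, PP, eval_add, eval_mul, eval_X]
        rw [← ih1, ← ih2]
        push_cast
        ring
      · simp only [ab, PP, eval_mul, eval_add, eval_sub, eval_pow, eval_X, eval_ofNat]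
        rw [← ih1, ← ih2]
        push_cast [Nat.cast_sub hdd]
        ring

lemma PP_deg : ∀ n, (PP (n + 1)).2.natDegree = 2 * (n + 1) ∧
    (PP (n + 1)).2.leadingCoeff = 3 ∧ (PP (n + 1)).1.natDegree ≤ 2 * n + 1 := by
  have hXX : (X ^ 2 - X : Polynomial ℤ).natDegree = 2 := by
    compute_degree!
  have hXXlc : (X ^ 2 - X : Polynomial ℤ).leadingCoeff = 1 := by
    rw [Polynomial.leadingCoeff, hXX]
    simp [coeff_X]
  have hXXne : (X ^ 2 - X : Polynomial ℤ) ≠ 0 := by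
    intro h
    rw [h] at hXX
    simp at hXX
  have h3lc : (3 : Polynomial ℤ).leadingCoeff = 3 := by
    rw [show (3 : Polynomial ℤ) = C 3 from (C_eq_intCast 3).symm, leadingCoeff_C]
  have h3deg : (3 : Polynomial ℤ).natDegree = 0 := by
    rw [show (3 : Polynomial ℤ) = C 3 from (C_eq_intCast 3).symm, natDegree_C]
  intro n
  induction n with
  | zero =>
      have h2 : (PP 1).2 = (X ^ 2 - X) * 3 := by
        show (PP (0 + 1)).2 = _
        simp only [PP]
        ring
      have h1 : (PP 1).1 = X := by
        show (PP (0 + 1)).1 = _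
        simp only [PP]
        ring
      refine ⟨?_, ?_, ?_⟩
      · rw [h2, natDegree_mul hXXne (by norm_num), hXX, h3deg]
      · rw [h2, leadingCoeff_mul, hXXlc, h3lc]
        ring
      · rw [h1, natDegree_X]
  | succ m ih =>
      obtain ⟨hdeg, hlc, hdeg1⟩ := ih
      have hne : (PP (m + 1)).2 ≠ 0 := by
        intro h
        rw [h] at hlc
        simp at hlc
      have h3 : (3 * (PP (m + 1)).1).natDegree < (PP (m + 1)).2.natDegree := by
        calc (3 * (PP (m + 1)).1).natDegree ≤ (3:Polynomial ℤ).natDegree + (PP (m + 1)).1.natDegree :=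
              natDegree_mul_le
          _ ≤ 2 * m + 1 := by rw [h3deg]; omega
          _ < 2 * (m + 1) := by omega
          _ = (PP (m + 1)).2.natDegree := hdeg.symm
      have hq1 : (3 * (PP (m + 1)).1 + (PP (m + 1)).2).natDegree = 2 * (m + 1) := by
        rw [natDegree_add_eq_right_of_natDegree_lt h3, hdeg]
      have hq2 : (3 * (PP (m + 1)).1 + (PP (m + 1)).2).leadingCoeff = 3 := by
        rw [leadingCoeff_add_of_degree_lt (degree_lt_degree h3), hlc]
      have hqne : (3 * (PP (m + 1)).1 + (PP (m + 1)).2) ≠ 0 := by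
        intro h
        rw [h] at hq2
        simp at hq2
      have e2 : (PP (m + 1 + 1)).2 = (X ^ 2 - X) * (3 * (PP (m + 1)).1 + (PP (m + 1)).2) := by
        simp only [PP]
      have e1 : (PP (m + 1 + 1)).1 = (PP (m + 1)).1 * X + (PP (m + 1)).2 * X := by
        simp only [PP]
      refine ⟨?_, ?_, ?_⟩
      · rw [e2, natDegree_mul hXXne hqne, hXX, hq1]
        ring
      · rw [e2, leadingCoeff_mul, hXXlc, hq2]
        ring
      · rw [e1]
        apply (natDegree_add_le _ _).trans
        apply max_le
        · apply (natDegree_mul_le).trans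
          simp only [natDegree_X]
          omega
        · apply (natDegree_mul_le).trans
          simp only [natDegree_X, hdeg]
          omega

lemma ab_bound (d : ℕ) (hd : 1 ≤ d) :
    ∀ n, (ab d n).1 + (ab d n).2 ≤ 3 ^ n * d ^ (2 * n) := by
  intro n
  induction n with
  | zero => simp [ab]
  | succ m ih =>
      rw [ab]
      set a := (ab d m).1
      set b := (ab d m).2
      set N := 3 ^ m * d ^ (2 * m) with hN
      have hdd : d ≤ d ^ 2 := by nlinarith
      have hc : d ^ 2 - d + d = d ^ 2 := Nat.sub_add_cancel hdd
      have hpow : 3 ^ (m + 1) * d ^ (2 * (m + 1)) = 3 * d ^ 2 * N := by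
        rw [hN, pow_succ, show 2 * (m + 1) = 2 * m + 2 by ring, pow_add]
        ring
      rw [hpow]
      set c := d ^ 2 - d
      have hcd : c + d = d ^ 2 := hc
      nlinarith [ih, Nat.mul_le_mul_left d ih, Nat.mul_le_mul_left (3 * c) ih,
        Nat.mul_le_mul_left c ih]

end BadAux

theorem badCountOne_poly_and_bound (n : ℕ) (hn : 1 ≤ n) :
    ∃ p : Polynomial ℤ, p.natDegree = 2 * n ∧
      (∀ d : ℕ, 1 ≤ d → (badCountOne n d : ℤ) = p.eval (d : ℤ)) ∧
      (∀ d : ℕ, 1 ≤ d → badCountOne n d ≤ 3 ^ n * d ^ (2 * n)) := by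
  obtain ⟨m, rfl⟩ : ∃ m, n = m + 1 := ⟨n - 1, by omega⟩
  refine ⟨(BadAux.PP (m + 1)).1 + (BadAux.PP (m + 1)).2, ?_, ?_, ?_⟩
  · obtain ⟨hdeg, hlc, hdeg1⟩ := BadAux.PP_deg m
    have h3 : (BadAux.PP (m + 1)).1.natDegree < (BadAux.PP (m + 1)).2.natDegree := by
      omega
    rw [Polynomial.natDegree_add_eq_right_of_natDegree_lt h3, hdeg]
  · intro d hd
    rw [BadAux.badCountOne_eq_ab (m + 1) d hd]
    push_cast
    rw [(BadAux.ab_eval d hd (m + 1)).1, (BadAux.ab_eval d hd (m + 1)).2]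
    simp
  · intro d hd
    rw [BadAux.badCountOne_eq_ab (m + 1) d hd]
    exact BadAux.ab_bound d hd (m + 1)
end

section
/- Let d and m be positive integers and let X₁, …, X_d be independent real random variables with E[X_j^{4m}] < ∞ for every j. Then Var( Σ_{α∈T(d,m)} (X^α)² ) ≤ |A_d^m| · max_{1≤j≤d} E[X_j^{4m}], where X^α = X₁^{α₁} ⋯ X_d^{α_d}. -/
/-!
STATEMENT 9: Let `d` and `m` be positive integers and let `X₁, …, X_d` be independent real
random variables with `E[X_j^{4m}] < ∞` for every `j`. Then
`Var(∑_{α ∈ T(d,m)} (X^α)²) ≤ |A_d^m| · max_{1≤j≤d} E[X_j^{4m}]`,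
where `X^α = X₁^{α₁} ⋯ X_d^{α_d}` and `A_d^m` is the set of ordered pairs of multi-indices
in `T(d,m) × T(d,m)` whose monomials share a variable.
-/

open MeasureTheory ProbabilityTheory

lemma amgm_nat {ι : Type*} (s : Finset ι) (y : ι → ℝ) (hy : ∀ i ∈ s, 0 ≤ y i)
    (γ : ι → ℕ) (n : ℕ) (hn : 0 < n) (hγ : ∑ i ∈ s, γ i = n) :
    ∏ i ∈ s, y i ^ γ i ≤ ∑ i ∈ s, ((γ i : ℝ) / n) * y i ^ n := by
  have hn' : (n : ℝ) ≠ 0 := Nat.cast_ne_zero.mpr hn.ne'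
  have h := Real.geom_mean_le_arith_mean_weighted s (fun i => (γ i : ℝ) / n)
      (fun i => y i ^ n) (fun i _ => by positivity)
      (by rw [← Finset.sum_div, ← Nat.cast_sum, hγ, div_self hn'])
      (fun i hi => pow_nonneg (hy i hi) n)
  refine le_trans (le_of_eq (Finset.prod_congr rfl fun i hi => ?_)) h
  have h0 : (0:ℝ) ≤ y i := hy i hi
  show y i ^ γ i = (y i ^ n) ^ ((γ i : ℝ) / n)
  rw [← Real.rpow_natCast (y i) n, ← Real.rpow_mul h0, ← Real.rpow_natCast (y i) (γ i)]
  congr 1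
  field_simp

lemma indep_prod_int {Ω : Type*} [MeasurableSpace Ω] (μ : Measure Ω)
    [IsProbabilityMeasure μ] {d : ℕ} (g : Fin d → Ω → ℝ)
    (hmeas : ∀ j, Measurable (g j))
    (hindep : iIndepFun g μ)
    (hint : ∀ j, Integrable (g j) μ) (s : Finset (Fin d)) :
    Integrable (fun ω => ∏ j ∈ s, g j ω) μ ∧
      ∫ ω, ∏ j ∈ s, g j ω ∂μ = ∏ j ∈ s, ∫ ω, g j ω ∂μ := by
  classical
  induction s using Finset.cons_induction with
  | empty => simp
  | cons i s hi ih =>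
    obtain ⟨hint_s, hval_s⟩ := ih
    have hIndep : IndepFun (fun ω => ∏ j ∈ s, g j ω) (g i) μ := by
      have h := hindep.indepFun_finsetProd_of_notMem hmeas hi
      have heq : (∏ j ∈ s, g j) = fun ω => ∏ j ∈ s, g j ω := by
        funext ω; simp
      rwa [heq] at h
    have hint' : Integrable (fun ω => (∏ j ∈ s, g j ω) * g i ω) μ :=
      hIndep.integrable_mul hint_s (hint i)
    have hval' := hIndep.integral_mul_eq_mul_integral hint_s.aestronglyMeasurable (hint i).aestronglyMeasurable
    constructor
    · have : (fun ω => ∏ j ∈ Finset.cons i s hi, g j ω)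
          = fun ω => (∏ j ∈ s, g j ω) * g i ω := by
        funext ω; rw [Finset.prod_cons, mul_comm]
      rw [this]; exact hint'
    · simp only [Finset.prod_cons, ← hval_s]
      have : (fun ω => g i ω * ∏ j ∈ s, g j ω)
          = (fun ω => ∏ j ∈ s, g j ω) * g i := by
        funext ω; simp [mul_comm]
      rw [this, hval', mul_comm]

theorem variance_sqNorm_le {Ω : Type*} [MeasurableSpace Ω]
    (μ : Measure Ω) [IsProbabilityMeasure μ]
    (d m : ℕ) (hd : 0 < d) (hm : 0 < m)
    (X : Fin d → Ω → ℝ)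
    (hmeas : ∀ j, Measurable (X j))
    (hindep : iIndepFun X μ)
    (hint : ∀ j, Integrable (fun ω => (X j ω) ^ (4 * m)) μ) :
    variance (fun ω => ∑ α ∈ Finset.Nat.antidiagonalTuple d m,
        (∏ j, (X j ω) ^ (α j)) ^ 2) μ
      ≤ ((Adm d m).card : ℝ) *
          Finset.univ.sup' (Finset.univ_nonempty_iff.mpr (Fin.pos_iff_nonempty.mp hd))
            (fun j => ∫ ω, (X j ω) ^ (4 * m) ∂μ) := by
  classical
  set T := Finset.Nat.antidiagonalTuple d m with hTdef
  set M := Finset.univ.sup' (Finset.univ_nonempty_iff.mpr (Fin.pos_iff_nonempty.mp hd))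
      (fun j => ∫ ω, (X j ω) ^ (4 * m) ∂μ) with hMdef
  have hMj : ∀ j, ∫ ω, (X j ω) ^ (4 * m) ∂μ ≤ M := by
    intro j
    rw [hMdef]
    exact Finset.le_sup' (fun j => ∫ ω, X j ω ^ (4 * m) ∂μ) (Finset.mem_univ j)
  -- integrability of even powers
  have hpow_int : ∀ (j : Fin d) (γ : ℕ), γ ≤ 2 * m →
      Integrable (fun ω => X j ω ^ (2 * γ)) μ := by
    intro j γ hγ
    have h1 : Integrable (fun ω => 1 + X j ω ^ (4 * m)) μ :=
      (integrable_const 1).add (hint j)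
    refine h1.mono' (((hmeas j).pow_const _).aestronglyMeasurable) ?_
    filter_upwards with ω
    have hnn : (0:ℝ) ≤ X j ω ^ (2 * γ) := by rw [pow_mul]; positivity
    rw [Real.norm_eq_abs, abs_of_nonneg hnn]
    have h2 : (X j ω ^ 2) ^ γ ≤ 1 + (X j ω ^ 2) ^ (2 * m) := by
      rcases le_total (X j ω ^ 2) 1 with h | h
      · have := pow_le_one₀ (n := γ) (sq_nonneg (X j ω)) h
        nlinarith [pow_nonneg (sq_nonneg (X j ω)) (2 * m)]
      · have := pow_le_pow_right₀ h hγ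
        nlinarith
    calc X j ω ^ (2 * γ) = (X j ω ^ 2) ^ γ := by rw [← pow_mul]
      _ ≤ 1 + (X j ω ^ 2) ^ (2 * m) := h2
      _ = 1 + X j ω ^ (4 * m) := by rw [← pow_mul]; ring_nf
  -- product integral formula
  have prodInt : ∀ e : Fin d → ℕ, (∀ j, e j ≤ 2 * m) →
      Integrable (fun ω => ∏ j, X j ω ^ (2 * e j)) μ ∧
      ∫ ω, ∏ j, X j ω ^ (2 * e j) ∂μ = ∏ j, ∫ ω, X j ω ^ (2 * e j) ∂μ := by
    intro e he
    have hind : iIndepFun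
        (fun j ω => X j ω ^ (2 * e j)) μ :=
      hindep.comp (fun j (x : ℝ) => x ^ (2 * e j))
        (fun j => measurable_id.pow_const _)
    exact indep_prod_int μ _ (fun j => (hmeas j).pow_const _) hind
      (fun j => hpow_int j (e j) (he j)) Finset.univ
  -- P e = product of moments
  set P : (Fin d → ℕ) → ℝ := fun e => ∏ j, ∫ ω, X j ω ^ (2 * e j) ∂μ with hPdef
  have hP0 : ∀ e, 0 ≤ P e := by
    intro e
    refine Finset.prod_nonneg fun j _ => integral_nonneg fun ω => ?_
    rw [pow_mul]; positivity
  -- components of T are ≤ m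
  have hTcomp : ∀ α ∈ T, ∀ j, α j ≤ m := by
    intro α hα j
    rw [hTdef, Finset.Nat.mem_antidiagonalTuple] at hα
    calc α j ≤ ∑ i, α i := Finset.single_le_sum (fun i _ => Nat.zero_le _) (Finset.mem_univ j)
      _ = m := hα
  have hTsum : ∀ α ∈ T, ∑ j, α j = m := by
    intro α hα; rwa [hTdef, Finset.Nat.mem_antidiagonalTuple] at hα
  -- main bound: P (α + β) ≤ M for α β ∈ T
  have hPle : ∀ α ∈ T, ∀ β ∈ T, P (fun j => α j + β j) ≤ M := by
    intro α hα β hβ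
    have hle : ∀ j, α j + β j ≤ 2 * m := fun j => by
      have := hTcomp α hα j; have := hTcomp β hβ j; omega
    have hsum : ∑ j, (α j + β j) = 2 * m := by
      rw [Finset.sum_add_distrib, hTsum α hα, hTsum β hβ]; ring
    obtain ⟨hi, he⟩ := prodInt (fun j => α j + β j) hle
    rw [hPdef]; dsimp only; rw [← he]
    have h2m : (0:ℕ) < 2 * m := by omega
    have hrhs_int : Integrable
        (fun ω => ∑ j, (((α j + β j : ℕ) : ℝ) / ((2 * m : ℕ) : ℝ)) * X j ω ^ (4 * m)) μ :=
      integrable_finset_sum _ fun j _ => (hint j).const_mul _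
    calc ∫ ω, ∏ j, X j ω ^ (2 * (α j + β j)) ∂μ
        ≤ ∫ ω, ∑ j, (((α j + β j : ℕ) : ℝ) / ((2 * m : ℕ) : ℝ)) * X j ω ^ (4 * m) ∂μ := by
          refine integral_mono hi hrhs_int fun ω => ?_
          have := amgm_nat Finset.univ (fun j => X j ω ^ 2) (fun j _ => sq_nonneg _)
            (fun j => α j + β j) (2 * m) h2m hsum
          calc ∏ j, X j ω ^ (2 * (α j + β j))
              = ∏ j, (X j ω ^ 2) ^ (α j + β j) := by
                refine Finset.prod_congr rfl fun j _ => ?_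
                rw [← pow_mul]
            _ ≤ ∑ j, (((α j + β j : ℕ) : ℝ) / ((2 * m : ℕ) : ℝ)) * (X j ω ^ 2) ^ (2 * m) := this
            _ = ∑ j, (((α j + β j : ℕ) : ℝ) / ((2 * m : ℕ) : ℝ)) * X j ω ^ (4 * m) := by
                refine Finset.sum_congr rfl fun j _ => ?_
                rw [← pow_mul]; ring_nf
      _ = ∑ j, (((α j + β j : ℕ) : ℝ) / ((2 * m : ℕ) : ℝ)) * ∫ ω, X j ω ^ (4 * m) ∂μ := by
          rw [integral_finset_sum _ fun j _ => (hint j).const_mul _]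
          exact Finset.sum_congr rfl fun j _ => integral_const_mul _ _
      _ ≤ ∑ j, (((α j + β j : ℕ) : ℝ) / ((2 * m : ℕ) : ℝ)) * M := by
          refine Finset.sum_le_sum fun j _ => ?_
          exact mul_le_mul_of_nonneg_left (hMj j) (by positivity)
      _ = M := by
          rw [← Finset.sum_mul, ← Finset.sum_div, ← Nat.cast_sum, hsum, div_self, one_mul]
          exact_mod_cast h2m.ne'
  -- rewrite the random variable
  have hYeq : ∀ (α : Fin d → ℕ) (ω : Ω),
      (∏ j, X j ω ^ (α j)) ^ 2 = ∏ j, X j ω ^ (2 * α j) := by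
    intro α ω
    rw [← Finset.prod_pow]
    exact Finset.prod_congr rfl fun j _ => by rw [← pow_mul, Nat.mul_comm]
  have hYYeq : ∀ (α β : Fin d → ℕ) (ω : Ω),
      (∏ j, X j ω ^ (2 * α j)) * (∏ j, X j ω ^ (2 * β j))
        = ∏ j, X j ω ^ (2 * (α j + β j)) := by
    intro α β ω
    rw [← Finset.prod_mul_distrib]
    exact Finset.prod_congr rfl fun j _ => by rw [← pow_add]; ring_nf
  have hcompT : ∀ α ∈ T, ∀ j, α j ≤ 2 * m := fun α hα j =>
    le_trans (hTcomp α hα j) (by omega)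
  have hYint : ∀ α ∈ T, Integrable (fun ω => ∏ j, X j ω ^ (2 * α j)) μ :=
    fun α hα => (prodInt α (hcompT α hα)).1
  have haddle : ∀ α ∈ T, ∀ β ∈ T, ∀ j, α j + β j ≤ 2 * m := fun α hα β hβ j => by
    have := hTcomp α hα j; have := hTcomp β hβ j; omega
  have hYYint : ∀ α ∈ T, ∀ β ∈ T,
      Integrable (fun ω => (∏ j, X j ω ^ (2 * α j)) * (∏ j, X j ω ^ (2 * β j))) μ := by
    intro α hα β hβ
    have := (prodInt (fun j => α j + β j) (haddle α hα β hβ)).1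
    refine this.congr ?_
    filter_upwards with ω
    exact (hYYeq α β ω).symm
  set S : Ω → ℝ := fun ω => ∑ α ∈ T, ∏ j, X j ω ^ (2 * α j) with hSdef
  have hSrw : (fun ω => ∑ α ∈ T, (∏ j, X j ω ^ (α j)) ^ 2) = S := by
    funext ω; exact Finset.sum_congr rfl fun α _ => hYeq α ω
  rw [hSrw]
  have hSmeas : Measurable S := by
    apply Finset.measurable_sum
    intro α _
    exact Finset.measurable_prod _ fun j _ => (hmeas j).pow_const _
  have hSsq_int : Integrable (fun ω => S ω ^ 2) μ := by
    have : (fun ω => S ω ^ 2)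
        = fun ω => ∑ α ∈ T, ∑ β ∈ T, (∏ j, X j ω ^ (2 * α j)) * (∏ j, X j ω ^ (2 * β j)) := by
      funext ω; rw [sq, hSdef]; exact Finset.sum_mul_sum T T _ _
    rw [this]
    exact integrable_finset_sum _ fun α hα => integrable_finset_sum _ fun β hβ =>
      hYYint α hα β hβ
    -- done
  have hS2 : MemLp S 2 μ := by
    exact (memLp_two_iff_integrable_sq hSmeas.aestronglyMeasurable).2 hSsq_int
  rw [variance_eq_sub hS2]
  have hint1 : μ[S ^ 2] = ∑ α ∈ T, ∑ β ∈ T, P (fun j => α j + β j) := by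
    have h1 : (S ^ 2 : Ω → ℝ)
        = fun ω => ∑ α ∈ T, ∑ β ∈ T, (∏ j, X j ω ^ (2 * α j)) * (∏ j, X j ω ^ (2 * β j)) := by
      funext ω
      show S ω ^ 2 = _
      rw [sq, hSdef]; exact Finset.sum_mul_sum T T _ _
    rw [h1, integral_finset_sum _ fun α hα => integrable_finset_sum _ fun β hβ =>
      hYYint α hα β hβ]
    refine Finset.sum_congr rfl fun α hα => ?_
    rw [integral_finset_sum _ fun β hβ => hYYint α hα β hβ]
    refine Finset.sum_congr rfl fun β hβ => ?_
    have heq2 := (prodInt (fun j => α j + β j) (haddle α hα β hβ)).2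
    have : ∫ ω, (∏ j, X j ω ^ (2 * α j)) * (∏ j, X j ω ^ (2 * β j)) ∂μ
        = ∫ ω, ∏ j, X j ω ^ (2 * (α j + β j)) ∂μ :=
      integral_congr_ae (by filter_upwards with ω; exact hYYeq α β ω)
    rw [this, heq2]
  have hint2 : μ[S] = ∑ α ∈ T, P α := by
    rw [hSdef, integral_finset_sum _ fun α hα => hYint α hα]
    exact Finset.sum_congr rfl fun α hα => (prodInt α (hcompT α hα)).2
  rw [hint1, hint2]
  have hsq : (∑ α ∈ T, P α) ^ 2 = ∑ α ∈ T, ∑ β ∈ T, P α * P β := by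
    rw [sq]; exact Finset.sum_mul_sum T T _ _
  rw [hsq, ← Finset.sum_sub_distrib]
  have hsub : ∀ α ∈ T, (∑ β ∈ T, P (fun j => α j + β j)) - ∑ β ∈ T, P α * P β
      = ∑ β ∈ T, (P (fun j => α j + β j) - P α * P β) := fun α _ =>
    (Finset.sum_sub_distrib _ _).symm
  rw [Finset.sum_congr rfl hsub]
  -- convert to sum over product
  have hprodsum : ∑ α ∈ T, ∑ β ∈ T, (P (fun j => α j + β j) - P α * P β)
      = ∑ p ∈ T ×ˢ T, (P (fun j => p.1 j + p.2 j) - P p.1 * P p.2) := by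
    rw [Finset.sum_product]
  rw [hprodsum]
  set F : (Fin d → ℕ) × (Fin d → ℕ) → ℝ :=
    fun p => P (fun j => p.1 j + p.2 j) - P p.1 * P p.2 with hFdef
  have hsplit := Finset.sum_filter_add_sum_filter_not (T ×ˢ T)
    (fun p => ∃ i, 1 ≤ p.1 i ∧ 1 ≤ p.2 i) F
  have hzero : ∑ p ∈ (T ×ˢ T).filter (fun p => ¬ ∃ i, 1 ≤ p.1 i ∧ 1 ≤ p.2 i), F p = 0 := by
    refine Finset.sum_eq_zero fun p hp => ?_
    rw [Finset.mem_filter] at hp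
    obtain ⟨hpmem, hpcond⟩ := hp
    push_neg at hpcond
    have hcase : ∀ i, p.1 i = 0 ∨ p.2 i = 0 := by
      intro i
      by_contra h
      push_neg at h
      exact absurd (hpcond i (Nat.one_le_iff_ne_zero.2 h.1)) (by
        simpa [Nat.lt_one_iff] using fun hh => h.2 (Nat.lt_one_iff.mp hh))
    rw [hFdef]
    dsimp only
    rw [sub_eq_zero, hPdef]
    dsimp only
    rw [← Finset.prod_mul_distrib]
    refine Finset.prod_congr rfl fun j _ => ?_
    rcases hcase j with h | h
    · rw [h]; simp
    · rw [h]; simp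
  have hAdm : Adm d m = (T ×ˢ T).filter (fun p => ∃ i, 1 ≤ p.1 i ∧ 1 ≤ p.2 i) := rfl
  calc ∑ p ∈ T ×ˢ T, F p
      = ∑ p ∈ (T ×ˢ T).filter (fun p => ∃ i, 1 ≤ p.1 i ∧ 1 ≤ p.2 i), F p := by
        rw [← hsplit, hzero, add_zero]
    _ ≤ ((Adm d m).card : ℝ) * M := by
        rw [hAdm]
        have hbound : ∀ p ∈ (T ×ˢ T).filter (fun p => ∃ i, 1 ≤ p.1 i ∧ 1 ≤ p.2 i), F p ≤ M := by
          intro p hp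
          rw [Finset.mem_filter, Finset.mem_product] at hp
          have h1 := hPle p.1 hp.1.1 p.2 hp.1.2
          have h2 : 0 ≤ P p.1 * P p.2 := mul_nonneg (hP0 _) (hP0 _)
          rw [hFdef]; dsimp only; linarith
        calc ∑ p ∈ (T ×ˢ T).filter (fun p => ∃ i, 1 ≤ p.1 i ∧ 1 ≤ p.2 i), F p
            ≤ ((T ×ˢ T).filter (fun p => ∃ i, 1 ≤ p.1 i ∧ 1 ≤ p.2 i)).card • M :=
              Finset.sum_le_card_nsmul _ _ _ hbound
          _ = _ := by rw [nsmul_eq_mul]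
end

section
/- Let d and m be positive integers, let X₁, …, X_d be independent real random variables with E[X_j] = 0 and E[X_j^{2m}] < ∞ for every j, and let (X'₁, …, X'_d) be an independent copy of (X₁, …, X_d). Then E[( Σ_{α∈T(d,m)} X^α (X')^α )²] ≤ |B_d^m| · ( max_{1≤j≤d} E[X_j^{2m}] )², where X^α = X₁^{α₁} ⋯ X_d^{α_d}. -/
/-!
STATEMENT 10: Let `d` and `m` be positive integers, let `X₁, …, X_d` be independent real
random variables with `E[X_j] = 0` and `E[X_j^{2m}] < ∞` for every `j`, and let
`(X'₁, …, X'_d)` be an independent copy of `(X₁, …, X_d)`. Then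
`E[(∑_{α ∈ T(d,m)} X^α (X')^α)²] ≤ |B_d^m| · (max_{1≤j≤d} E[X_j^{2m}])²`,
where `X^α = X₁^{α₁} ⋯ X_d^{α_d}` and `B_d^m` is the set of ordered pairs of multi-indices
in `T(d,m) × T(d,m)` whose product monomial contains no variable of degree exactly 1.
-/

open MeasureTheory ProbabilityTheory
open scoped ENNReal NNReal

section Aux
variable {Ω : Type*} [MeasurableSpace Ω] {μ : Measure Ω}

variable {Ω : Type*} [MeasurableSpace Ω] {μ : Measure Ω}

/-- Product of independent integrable random variables is integrable, and its
expectation is the product of expectations. -/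
lemma aux_indep_prod [IsProbabilityMeasure μ] {ι : Type*} {f : ι → Ω → ℝ}
    (hindep : iIndepFun f μ)
    (hmeas : ∀ i, Measurable (f i)) (hint : ∀ i, Integrable (f i) μ) (s : Finset ι) :
    Integrable (∏ i ∈ s, f i) μ ∧
      integral μ (∏ i ∈ s, f i) = ∏ i ∈ s, integral μ (f i) := by
  classical
  induction s using Finset.induction_on with
  | empty => exact ⟨by rw [Finset.prod_empty, show (1 : Ω → ℝ) = fun _ => (1:ℝ) from rfl]; exact integrable_const 1, by rw [Finset.prod_empty, Finset.prod_empty, show (1 : Ω → ℝ) = fun _ => 1 from rfl, integral_const]; simp⟩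
  | @insert i s hi ih =>
    have hIF : IndepFun (∏ j ∈ s, f j) (f i) μ :=
      iIndepFun.indepFun_finset_prod_of_notMem hindep hmeas hi
    rw [Finset.prod_insert hi, Finset.prod_insert hi, mul_comm (f i)]
    exact ⟨hIF.integrable_mul ih.1 (hint i),
      by rw [hIF.integral_mul_eq_mul_integral ih.1.aestronglyMeasurable (hint i).aestronglyMeasurable, ih.2, mul_comm]⟩

lemma aux_memLp [IsProbabilityMeasure μ] {Y : Ω → ℝ} (hY : Measurable Y) {n : ℕ} (hn : 0 < n)
    (hint : Integrable (fun ω => |Y ω| ^ n) μ) : MemLp Y ((n : ℝ≥0∞)) μ := by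
  have hiff := memLp_norm_rpow_iff (μ := μ) (q := (n : ℝ≥0∞)) (p := (n : ℝ≥0∞))
      hY.aestronglyMeasurable (by exact_mod_cast hn.ne') (by simp)
  rw [ENNReal.div_self (by exact_mod_cast hn.ne') (by simp)] at hiff
  refine hiff.mp ?_
  rw [memLp_one_iff_integrable]
  refine hint.congr ?_
  refine Filter.Eventually.of_forall (fun ω => ?_)
  simp [Real.norm_eq_abs, ← Real.rpow_natCast]

lemma aux_lyapunov [IsProbabilityMeasure μ] {Y : Ω → ℝ} (hY : Measurable Y) {n : ℕ} (hn : 0 < n)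
    (hint : Integrable (fun ω => |Y ω| ^ n) μ) {k : ℕ} (hk : k ≤ n) :
    Integrable (fun ω => Y ω ^ k) μ ∧
      ∫ ω, |Y ω| ^ k ∂μ ≤ (∫ ω, |Y ω| ^ n ∂μ) ^ ((k : ℝ) / n) := by
  have hLn : MemLp Y ((n : ℝ≥0∞)) μ := aux_memLp hY hn hint
  have hLk : MemLp Y ((k : ℝ≥0∞)) μ := hLn.mono_exponent (by exact_mod_cast hk)
  have habs : Integrable (fun ω => |Y ω| ^ k) μ := by
    rcases Nat.eq_zero_or_pos k with hk0 | hk0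
    · simpa [hk0] using integrable_const (1 : ℝ)
    · have := hLk.integrable_norm_rpow (by exact_mod_cast hk0.ne') (by simp)
      refine this.congr (Filter.Eventually.of_forall (fun ω => ?_))
      simp [Real.norm_eq_abs, ← Real.rpow_natCast]
  have hintk : Integrable (fun ω => Y ω ^ k) μ := by
    refine habs.mono' (hY.pow_const k).aestronglyMeasurable
      (Filter.Eventually.of_forall (fun ω => ?_))
    simp [Real.norm_eq_abs, abs_pow]
  refine ⟨hintk, ?_⟩
  rcases Nat.eq_zero_or_pos k with hk0 | hk0
  · simp [hk0]
  rcases eq_or_lt_of_le hk with hkn | hkn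
  · subst hkn
    rw [div_self (by positivity), Real.rpow_one]
  -- Hölder with exponents n/k and n/(n-k)
  have hconj : Real.HolderConjugate ((n : ℝ) / k) ((n : ℝ) / (n - k)) := by
    rw [Real.holderConjugate_iff]
    constructor
    · rw [lt_div_iff₀ (by positivity)]
      norm_num
      exact_mod_cast hkn
    · have hnk : (0:ℝ) < (n:ℝ) - k := by
        have : (k:ℝ) < n := by exact_mod_cast hkn
        linarith
      field_simp
      ring
  have hfLp : MemLp (fun ω => |Y ω| ^ k) (ENNReal.ofReal ((n : ℝ) / k)) μ := by
    have hiff := memLp_norm_rpow_iff (μ := μ) (q := (k : ℝ≥0∞)) (p := (n : ℝ≥0∞))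
        hY.aestronglyMeasurable (by exact_mod_cast hk0.ne') (by simp)
    have h2 := hiff.mpr hLn
    have hcast : ((n : ℝ≥0∞) / (k : ℝ≥0∞)) = ENNReal.ofReal ((n : ℝ) / k) := by
      rw [ENNReal.ofReal_div_of_pos (by positivity)]
      simp
    rw [hcast] at h2
    have hfun : (fun x => ‖Y x‖ ^ ((k : ℝ≥0∞)).toReal) = (fun ω => |Y ω| ^ k) := by
      funext x; simp [Real.norm_eq_abs, ← Real.rpow_natCast]
    rwa [hfun] at h2
  have hgLp : MemLp (fun _ : Ω => (1 : ℝ)) (ENNReal.ofReal ((n : ℝ) / (n - k))) μ :=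
    memLp_const 1
  have hH := integral_mul_le_Lp_mul_Lq_of_nonneg hconj
    (Filter.Eventually.of_forall (fun ω => by positivity))
    (Filter.Eventually.of_forall (fun _ => zero_le_one)) hfLp hgLp
  simp only [mul_one] at hH
  have hnat : (fun a : Ω => (|Y a| ^ k) ^ ((n : ℝ) / k)) = fun a : Ω => |Y a| ^ n := by
    funext a
    rw [← Real.rpow_natCast (|Y a|) k, ← Real.rpow_mul (abs_nonneg _)]
    rw [show (k : ℝ) * ((n : ℝ) / k) = (n : ℝ) by field_simp]
    rw [Real.rpow_natCast]
  rw [hnat] at hH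
  have hone : (fun a : Ω => (1 : ℝ) ^ ((n : ℝ) / (n - k))) = fun _ : Ω => (1:ℝ) := by
    funext a; rw [Real.one_rpow]
  rw [hone] at hH
  simp only [integral_const, measure_univ, probReal_univ, ENNReal.toReal_one, one_smul, Real.one_rpow,
    mul_one] at hH
  rwa [one_div_div] at hH

end Aux

theorem inner_moment_le {Ω : Type*} [MeasurableSpace Ω]
    (μ : Measure Ω) [IsProbabilityMeasure μ]
    (d m : ℕ) (hd : 0 < d) (hm : 0 < m)
    (X X' : Fin d → Ω → ℝ)
    (hmeas : ∀ j, Measurable (X j)) (hmeas' : ∀ j, Measurable (X' j))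
    (hindep : iIndepFun X μ)
    (hmean : ∀ j, ∫ ω, X j ω ∂μ = 0)
    (hint : ∀ j, Integrable (fun ω => (X j ω) ^ (2 * m)) μ)
    (hcopy_indep : IndepFun (fun ω (j : Fin d) => X j ω) (fun ω (j : Fin d) => X' j ω) μ)
    (hcopy_id : Measure.map (fun ω (j : Fin d) => X' j ω) μ
      = Measure.map (fun ω (j : Fin d) => X j ω) μ) :
    ∫ ω, (∑ α ∈ Finset.Nat.antidiagonalTuple d m,
        (∏ j, (X j ω) ^ (α j)) * (∏ j, (X' j ω) ^ (α j))) ^ 2 ∂μ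
      ≤ ((Bdm d m).card : ℝ) *
          (Finset.univ.sup' (Finset.univ_nonempty_iff.mpr (Fin.pos_iff_nonempty.mp hd))
            (fun j => ∫ ω, (X j ω) ^ (2 * m) ∂μ)) ^ 2 := by
  classical
  set T := Finset.Nat.antidiagonalTuple d m with hT
  set n := 2 * m with hn
  have hn0 : 0 < n := by omega
  set M := Finset.univ.sup' (Finset.univ_nonempty_iff.mpr (Fin.pos_iff_nonempty.mp hd))
      (fun j => ∫ ω, (X j ω) ^ n ∂μ) with hM
  have heven : ∀ x : ℝ, x ^ n = |x| ^ n := fun x =>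
    (Even.pow_abs ⟨m, by omega⟩ x).symm
  -- per-variable quantities
  set a : Fin d → ℝ := fun j => ∫ ω, (X j ω) ^ n ∂μ with ha
  have habs_int : ∀ j, Integrable (fun ω => |X j ω| ^ n) μ := fun j =>
    (hint j).congr (Filter.Eventually.of_forall fun ω => (heven _))
  have ha_abs : ∀ j, ∫ ω, |X j ω| ^ n ∂μ = a j := fun j =>
    integral_congr_ae (Filter.Eventually.of_forall fun ω => (heven _).symm)
  have ha_nonneg : ∀ j, 0 ≤ a j := fun j =>
    integral_nonneg fun ω => by rw [heven]; positivity
  have hjM : ∀ j, a j ≤ M := fun j => Finset.le_sup' _ (Finset.mem_univ j)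
  have hM0 : 0 ≤ M := le_trans (ha_nonneg ⟨0, hd⟩) (hjM ⟨0, hd⟩)
  -- Lyapunov facts
  have hLya : ∀ (j : Fin d) (k : ℕ), k ≤ n →
      Integrable (fun ω => X j ω ^ k) μ ∧
        ∫ ω, |X j ω| ^ k ∂μ ≤ (a j) ^ ((k : ℝ) / n) := by
    intro j k hk
    have h := aux_lyapunov (hmeas j) hn0 (habs_int j) hk
    exact ⟨h.1, by rw [← ha_abs j]; exact h.2⟩
  -- product facts for a multi-index k bounded by n
  set XT : Ω → Fin d → ℝ := fun ω j => X j ω with hXT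
  set X'T : Ω → Fin d → ℝ := fun ω j => X' j ω with hX'T
  have hXTm : AEMeasurable XT μ := (measurable_pi_lambda _ fun j => hmeas j).aemeasurable
  have hX'Tm : AEMeasurable X'T μ := (measurable_pi_lambda _ fun j => hmeas' j).aemeasurable
  have hΦm : ∀ k : Fin d → ℕ, Measurable (fun v : Fin d → ℝ => ∏ j, v j ^ k j) := by
    intro k
    exact Finset.measurable_prod _ fun j _ => (measurable_pi_apply j).pow_const (k j)
  have hIntProd : ∀ k : Fin d → ℕ, (∀ j, k j ≤ n) →
      Integrable (fun ω => ∏ j, X j ω ^ k j) μ ∧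
        (∫ ω, ∏ j, X j ω ^ k j ∂μ) = ∏ j, ∫ ω, X j ω ^ k j ∂μ := by
    intro k hk
    have hi : iIndepFun (fun j ω => X j ω ^ k j) μ :=
      hindep.comp (fun j x => x ^ k j) fun j => measurable_id.pow_const (k j)
    have h := aux_indep_prod hi (fun j => (hmeas j).pow_const (k j))
      (fun j => (hLya j (k j) (hk j)).1) Finset.univ
    constructor
    · have := h.1
      simpa [Finset.prod_fn] using this
    · have h2 := h.2
      simpa [Finset.prod_fn] using h2
  have hInt' : ∀ k : Fin d → ℕ, (∀ j, k j ≤ n) →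
      Integrable (fun ω => ∏ j, X' j ω ^ k j) μ := by
    intro k hk
    have h1 : Integrable ((fun v : Fin d → ℝ => ∏ j, v j ^ k j) ∘ XT) μ := (hIntProd k hk).1
    have h2 : Integrable (fun v : Fin d → ℝ => ∏ j, v j ^ k j) (Measure.map XT μ) :=
      (integrable_map_measure ((hΦm k).aestronglyMeasurable) hXTm).mpr h1
    rw [← hcopy_id] at h2
    exact (integrable_map_measure ((hΦm k).aestronglyMeasurable) hX'Tm).mp h2
  have hEq' : ∀ k : Fin d → ℕ,
      (∫ ω, ∏ j, X' j ω ^ k j ∂μ) = ∫ ω, ∏ j, X j ω ^ k j ∂μ := by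
    intro k
    calc (∫ ω, ∏ j, X' j ω ^ k j ∂μ)
        = ∫ v, ∏ j, v j ^ k j ∂(Measure.map X'T μ) :=
          (integral_map hX'Tm ((hΦm k).aestronglyMeasurable)).symm
      _ = ∫ v, ∏ j, v j ^ k j ∂(Measure.map XT μ) := by rw [hcopy_id]
      _ = ∫ ω, ∏ j, X j ω ^ k j ∂μ := integral_map hXTm ((hΦm k).aestronglyMeasurable)
  -- independence of the two product blocks
  have hIndepBlk : ∀ k : Fin d → ℕ,
      IndepFun (fun ω => ∏ j, X j ω ^ k j) (fun ω => ∏ j, X' j ω ^ k j) μ := by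
    intro k
    exact hcopy_indep.comp (hΦm k) (hΦm k)
  -- bounds on multi-index sums from membership in T
  have hmemT : ∀ {α : Fin d → ℕ}, α ∈ T → ∑ j, α j = m := by
    intro α hα
    exact (Finset.Nat.mem_antidiagonalTuple).mp hα
  have hkle : ∀ {α β : Fin d → ℕ}, α ∈ T → β ∈ T → ∀ j, α j + β j ≤ n := by
    intro α β hα hβ j
    have h1 : α j ≤ m := (hmemT hα) ▸ Finset.single_le_sum (fun i _ => Nat.zero_le _) (Finset.mem_univ j)
    have h2 : β j ≤ m := (hmemT hβ) ▸ Finset.single_le_sum (fun i _ => Nat.zero_le _) (Finset.mem_univ j)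
    omega
  -- definition of I
  set I : (Fin d → ℕ) → ℝ := fun k => ∫ ω, ∏ j, X j ω ^ k j ∂μ with hI
  -- each term integrable and its integral
  have hterm : ∀ α β : Fin d → ℕ, α ∈ T → β ∈ T →
      Integrable (fun ω => ((∏ j, X j ω ^ α j) * (∏ j, X' j ω ^ α j)) *
          ((∏ j, X j ω ^ β j) * (∏ j, X' j ω ^ β j))) μ ∧
      (∫ ω, ((∏ j, X j ω ^ α j) * (∏ j, X' j ω ^ α j)) *
          ((∏ j, X j ω ^ β j) * (∏ j, X' j ω ^ β j)) ∂μ) = (I (fun j => α j + β j)) ^ 2 := by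
    intro α β hα hβ
    set k : Fin d → ℕ := fun j => α j + β j with hk
    have hkn : ∀ j, k j ≤ n := hkle hα hβ
    have hre : (fun ω => ((∏ j, X j ω ^ α j) * (∏ j, X' j ω ^ α j)) *
          ((∏ j, X j ω ^ β j) * (∏ j, X' j ω ^ β j)))
        = fun ω => (∏ j, X j ω ^ k j) * (∏ j, X' j ω ^ k j) := by
      funext ω
      rw [mul_mul_mul_comm, ← Finset.prod_mul_distrib, ← Finset.prod_mul_distrib]
      simp [hk, pow_add]
    rw [hre]
    refine ⟨(hIndepBlk k).integrable_mul (hIntProd k hkn).1 (hInt' k hkn), ?_⟩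
    have := (hIndepBlk k).integral_mul_eq_mul_integral (hIntProd k hkn).1.aestronglyMeasurable (hInt' k hkn).aestronglyMeasurable
    rw [show ((fun ω => ∏ j, X j ω ^ k j) * fun ω => ∏ j, X' j ω ^ k j)
        = fun ω => (∏ j, X j ω ^ k j) * (∏ j, X' j ω ^ k j) from rfl] at this
    rw [this, hEq' k, sq]
  -- expand the square and integrate term by term
  have hLHS : (∫ ω, (∑ α ∈ T, (∏ j, X j ω ^ α j) * (∏ j, X' j ω ^ α j)) ^ 2 ∂μ)
      = ∑ α ∈ T, ∑ β ∈ T, I (fun j => α j + β j) ^ 2 := by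
    have hpt : ∀ ω : Ω, (∑ α ∈ T, (∏ j, X j ω ^ α j) * (∏ j, X' j ω ^ α j)) ^ 2
        = ∑ α ∈ T, ∑ β ∈ T, ((∏ j, X j ω ^ α j) * (∏ j, X' j ω ^ α j)) *
            ((∏ j, X j ω ^ β j) * (∏ j, X' j ω ^ β j)) := by
      intro ω
      rw [sq, Finset.sum_mul_sum]
    simp_rw [hpt]
    rw [integral_finset_sum T fun α hα =>
      integrable_finset_sum T fun β hβ => (hterm α β hα hβ).1]
    refine Finset.sum_congr rfl fun α hα => ?_
    rw [integral_finset_sum T fun β hβ => (hterm α β hα hβ).1]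
    exact Finset.sum_congr rfl fun β hβ => (hterm α β hα hβ).2
  rw [hLHS]
  -- bound each |I k| by M when ∑ k = n
  have hIM : ∀ {α β : Fin d → ℕ}, α ∈ T → β ∈ T → |I (fun j => α j + β j)| ≤ M := by
    intro α β hα hβ
    set k : Fin d → ℕ := fun j => α j + β j with hk
    have hkn : ∀ j, k j ≤ n := hkle hα hβ
    have hksum : ∑ j, k j = n := by
      rw [hk]
      rw [Finset.sum_add_distrib, hmemT hα, hmemT hβ]; omega
    have hc : ∀ j, |∫ ω, X j ω ^ k j ∂μ| ≤ (M ^ ((1 : ℝ) / n)) ^ k j := by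
      intro j
      have h1 : |∫ ω, X j ω ^ k j ∂μ| ≤ ∫ ω, |X j ω| ^ k j ∂μ := by
        calc |∫ ω, X j ω ^ k j ∂μ| ≤ ∫ ω, |X j ω ^ k j| ∂μ := by
              simpa [Real.norm_eq_abs] using
                norm_integral_le_integral_norm (fun ω => X j ω ^ k j) (μ := μ)
          _ = ∫ ω, |X j ω| ^ k j ∂μ := by simp [abs_pow]
      have h2 : ∫ ω, |X j ω| ^ k j ∂μ ≤ (a j) ^ ((k j : ℝ) / n) := (hLya j (k j) (hkn j)).2
      have h3 : (a j) ^ ((k j : ℝ) / n) = ((a j) ^ ((1:ℝ)/n)) ^ (k j) := by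
        rw [← Real.rpow_natCast ((a j) ^ ((1:ℝ)/n)) (k j), ← Real.rpow_mul (ha_nonneg j)]
        congr 1
        field_simp
      have h4 : ((a j) ^ ((1:ℝ)/n)) ^ (k j) ≤ (M ^ ((1:ℝ)/n)) ^ (k j) :=
        pow_le_pow_left₀ (Real.rpow_nonneg (ha_nonneg j) _)
          (Real.rpow_le_rpow (ha_nonneg j) (hjM j) (by positivity)) _
      calc |∫ ω, X j ω ^ k j ∂μ| ≤ ∫ ω, |X j ω| ^ k j ∂μ := h1
        _ ≤ (a j) ^ ((k j : ℝ) / n) := h2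
        _ = ((a j) ^ ((1:ℝ)/n)) ^ (k j) := h3
        _ ≤ (M ^ ((1:ℝ)/n)) ^ (k j) := h4
    have hIk : I k = ∏ j, ∫ ω, X j ω ^ k j ∂μ := (hIntProd k hkn).2
    have : |I k| ≤ ∏ j, (M ^ ((1:ℝ)/n)) ^ k j := by
      rw [hIk, Finset.abs_prod]
      exact Finset.prod_le_prod (fun j _ => abs_nonneg _) fun j _ => hc j
    calc |I k| ≤ ∏ j, (M ^ ((1:ℝ)/n)) ^ k j := this
      _ = (M ^ ((1:ℝ)/n)) ^ (∑ j, k j) := Finset.prod_pow_eq_pow_sum _ _ _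
      _ = M := by
          rw [hksum, ← Real.rpow_natCast (M ^ ((1:ℝ)/n)) n, ← Real.rpow_mul hM0,
            one_div, inv_mul_cancel₀ (by exact_mod_cast hn0.ne'), Real.rpow_one]
  -- vanishing outside Bdm and final bound
  have hvanish : ∀ {α β : Fin d → ℕ}, α ∈ T → β ∈ T → (∃ i, α i + β i = 1) →
      I (fun j => α j + β j) = 0 := by
    intro α β hα hβ ⟨i, hi⟩
    have hIk : I (fun j => α j + β j) = ∏ j, ∫ ω, X j ω ^ (α j + β j) ∂μ :=
      (hIntProd _ (hkle hα hβ)).2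
    rw [hIk]
    refine Finset.prod_eq_zero (Finset.mem_univ i) ?_
    rw [hi]
    simpa using hmean i
  have hsum_eq : ∑ α ∈ T, ∑ β ∈ T, I (fun j => α j + β j) ^ 2
      = ∑ p ∈ Bdm d m, I (fun j => p.1 j + p.2 j) ^ 2 := by
    have hps : ∑ p ∈ T ×ˢ T, I (fun j => p.1 j + p.2 j) ^ 2
        = ∑ α ∈ T, ∑ β ∈ T, I (fun j => α j + β j) ^ 2 :=
      Finset.sum_product' T T (fun α β => I (fun j => α j + β j) ^ 2)
    rw [← hps]
    rw [Bdm, ← hT]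
    rw [← Finset.sum_filter_add_sum_filter_not (T ×ˢ T)
      (fun p => ∀ i, p.1 i + p.2 i ≠ 1) (fun p => I (fun j => p.1 j + p.2 j) ^ 2)]
    have hz : ∑ p ∈ (T ×ˢ T).filter (fun p => ¬ ∀ i, p.1 i + p.2 i ≠ 1),
        I (fun j => p.1 j + p.2 j) ^ 2 = 0 := by
      refine Finset.sum_eq_zero fun p hp => ?_
      rw [Finset.mem_filter] at hp
      obtain ⟨hpT, hpn⟩ := hp
      push_neg at hpn
      obtain ⟨i, hi⟩ := hpn
      rw [Finset.mem_product] at hpT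
      rw [hvanish hpT.1 hpT.2 ⟨i, hi⟩]
      ring
    rw [hz, add_zero]
  rw [hsum_eq]
  have hbound : ∀ p ∈ Bdm d m, I (fun j => p.1 j + p.2 j) ^ 2 ≤ M ^ 2 := by
    intro p hp
    rw [Bdm, Finset.mem_filter, Finset.mem_product] at hp
    have h := hIM hp.1.1 hp.1.2
    rw [← sq_abs]
    exact pow_le_pow_left₀ (abs_nonneg _) h 2
  calc ∑ p ∈ Bdm d m, I (fun j => p.1 j + p.2 j) ^ 2
      ≤ ∑ _p ∈ Bdm d m, M ^ 2 := Finset.sum_le_sum hbound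
    _ = ((Bdm d m).card : ℝ) * M ^ 2 := by
        rw [Finset.sum_const, nsmul_eq_mul]
end
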